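/- arXiv:0908.3210 — 6 statements merged into one kernel-verified Lean document; each statement's English description precedes it below -/
import Mathlib

section
/- If g is a positive harmonic function on the upper half plane ℂ⁺ and y·g(iy) → 0 as y → +∞, then g is identically zero. -/
open MeasureTheory Filter Set

/-- The Laplacian of `g : ℂ → ℝ`, computed as the sum of the second directional
derivatives in the directions `1` and `I`. -/
noncomputable def laplacian (g : ℂ → ℝ) (z : ℂ) : ℝ :=
  fderiv ℝ (fun w => fderiv ℝ g w 1) z 1 +
    fderiv ℝ (fun w => fderiv ℝ g w Complex.I) z Complex.I

/-- `g` is harmonic on the open upper half plane. -/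
def HarmonicOnUHP (g : ℂ → ℝ) : Prop :=
  ContDiffOn ℝ 2 g {z : ℂ | 0 < z.im} ∧ ∀ z : ℂ, 0 < z.im → laplacian g z = 0

open Complex intervalIntegral Interval Metric

noncomputable def hd (g : ℂ → ℝ) (z : ℂ) : ℂ :=
  (fderiv ℝ g z 1 : ℝ) - Complex.I * (fderiv ℝ g z Complex.I : ℝ)

lemma isOpenU : IsOpen {z : ℂ | 0 < z.im} := isOpen_lt continuous_const Complex.continuous_im

lemma realCLM_apply {E : Type*} [NormedAddCommGroup E] [NormedSpace ℝ E]
    (L : ℂ →L[ℝ] E) (w : ℂ) : L w = w.re • L 1 + w.im • L I := by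
  have h : w = w.re • (1:ℂ) + w.im • I := by simp [Complex.real_smul]
  conv_lhs => rw [h]
  rw [map_add, L.map_smul, L.map_smul]

lemma hd_diff {g : ℂ → ℝ} (hg : HarmonicOnUHP g) {z : ℂ} (hz : 0 < z.im) :
    DifferentiableAt ℂ (hd g) z := by
  have hmem : {z : ℂ | 0 < z.im} ∈ nhds z := isOpenU.mem_nhds hz
  have hc : ContDiffAt ℝ 2 g z := hg.1.contDiffAt hmem
  have hf' : ContDiffAt ℝ 1 (fderiv ℝ g) z := hc.fderiv_right (by norm_num)
  set S := fderiv ℝ (fderiv ℝ g) z with hSdef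
  have hS : HasFDerivAt (fderiv ℝ g) S z :=
    (hf'.differentiableAt one_ne_zero).hasFDerivAt
  have hA : HasFDerivAt (fun w => fderiv ℝ g w 1)
      ((fderiv ℝ g z).comp (0 : ℂ →L[ℝ] ℂ) + S.flip 1) z :=
    hS.clm_apply (hasFDerivAt_const (1:ℂ) z)
  have hB : HasFDerivAt (fun w => fderiv ℝ g w I)
      ((fderiv ℝ g z).comp (0 : ℂ →L[ℝ] ℂ) + S.flip I) z :=
    hS.clm_apply (hasFDerivAt_const (I:ℂ) z)
  have hsymm : ∀ v w : ℂ, S v w = S w v := fun v w =>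
    (hc.isSymmSndFDerivAt (by simp)).eq v w
  have hlap : S 1 1 + S I I = 0 := by
    have h0 := hg.2 z hz
    unfold laplacian at h0
    rw [hA.fderiv, hB.fderiv] at h0
    simpa using h0
  set L : ℂ →L[ℝ] ℂ :=
    Complex.ofRealCLM.comp ((fderiv ℝ g z).comp (0 : ℂ →L[ℝ] ℂ) + S.flip 1)
      - I • Complex.ofRealCLM.comp ((fderiv ℝ g z).comp (0 : ℂ →L[ℝ] ℂ) + S.flip I) with hLdef
  have hL : HasFDerivAt (hd g) L z := by
    have h1 := Complex.ofRealCLM.hasFDerivAt.comp z hA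
    have h2 := (Complex.ofRealCLM.hasFDerivAt.comp z hB).const_mul I
    have h3 : HasFDerivAt (hd g) _ z := h1.sub h2
    simpa [hLdef, smul_eq_mul] using h3
  have hCR : ∀ w : ℂ, L w = w * L 1 := by
    intro w
    rw [realCLM_apply L w]
    have hL1 : L 1 = (S 1 1 : ℂ) - I * (S 1 I : ℂ) := by
      simp [hLdef, smul_eq_mul]
    have hLI : L I = (S I 1 : ℂ) - I * (S I I : ℂ) := by
      simp [hLdef, smul_eq_mul]
    have hII : (S I I : ℝ) = - S 1 1 := by linarith
    have hIs : (S I 1 : ℝ) = S 1 I := hsymm I 1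
    rw [hL1, hLI, hII, hIs]
    apply Complex.ext <;> simp [Complex.real_smul] <;> ring
  have hder : HasDerivAt (hd g) (L 1) z := by
    rw [hasDerivAt_iff_isLittleO]
    have h3 := hL.isLittleO
    exact h3.congr' (by filter_upwards with w using by rw [hCR, smul_eq_mul]) EventuallyEq.rfl
  exact hder.differentiableAt

lemma isOpenU' : IsOpen {z : ℂ | 0 < z.im} := isOpen_lt continuous_const Complex.continuous_im

noncomputable def prim (h : ℂ → ℂ) (z : ℂ) : ℂ :=
  (∫ t : ℝ in (0:ℝ)..z.re, h (t + I)) + I • ∫ t : ℝ in (1:ℝ)..z.im, h (z.re + t * I)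

section
variable {h : ℂ → ℂ} (hcont : ContinuousOn h {z : ℂ | 0 < z.im})
  (hdiff : DifferentiableOn ℂ h {z : ℂ | 0 < z.im})

-- integrability of horizontal/vertical segments
lemma integrable_hor (hcont : ContinuousOn h {z : ℂ | 0 < z.im}) {a b y : ℝ} (hy : 0 < y) :
    IntervalIntegrable (fun t : ℝ => h (t + y * I)) volume a b := by
  apply ContinuousOn.intervalIntegrable
  apply hcont.comp (Continuous.continuousOn (by continuity))
  intro t _
  simp [Complex.add_im, hy.ne']
  simpa using hy

lemma integrable_ver (hcont : ContinuousOn h {z : ℂ | 0 < z.im}) {x c d : ℝ} (hc : 0 < c)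
    (hd : 0 < d) :
    IntervalIntegrable (fun t : ℝ => h (x + t * I)) volume c d := by
  apply ContinuousOn.intervalIntegrable
  apply hcont.comp (Continuous.continuousOn (by continuity))
  intro t ht
  have : 0 < t := lt_of_lt_of_le (lt_min hc hd) (by simpa using ht.1)
  simpa using this

end

lemma rect_subset {x u y v : ℝ} (hy : 0 < y) (hv : 0 < v) :
    ([[x, u]] ×ℂ [[y, v]]) ⊆ {z : ℂ | 0 < z.im} := by
  intro w hw
  rw [Complex.mem_reProdIm] at hw
  have := hw.2.1
  simp only [mem_setOf_eq]
  calc (0:ℝ) < min y v := lt_min hy hv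
    _ ≤ w.im := by simpa [Set.uIcc] using hw.2.1

lemma prim_sub {h : ℂ → ℂ} (hcont : ContinuousOn h {z : ℂ | 0 < z.im})
    (hdiff : DifferentiableOn ℂ h {z : ℂ | 0 < z.im}) {z w : ℂ}
    (hz : 0 < z.im) (hw : 0 < w.im) :
    prim h w - prim h z = (∫ t : ℝ in z.re..w.re, h (t + (z.im:ℝ) * I))
      + I • ∫ t : ℝ in z.im..w.im, h ((w.re:ℝ) + t * I) := by
  set x := z.re; set y := z.im; set u := w.re; set v := w.im
  -- Goursat on the rectangle with corners (x,1) and (u,y)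
  have hzc : (Complex.mk x 1).re = x := rfl
  have goursat := Complex.integral_boundary_rect_eq_zero_of_differentiableOn h
      (Complex.mk x 1) (Complex.mk u y)
      (hdiff.mono (by simpa using rect_subset one_pos hz))
  simp only [show (Complex.mk x 1).re = x from rfl, show (Complex.mk x 1).im = 1 from rfl,
    show (Complex.mk u y).re = u from rfl, show (Complex.mk u y).im = y from rfl] at goursat
  -- unfold prim
  show ((∫ t : ℝ in (0:ℝ)..u, h (t + I)) + I • ∫ t : ℝ in (1:ℝ)..v, h ((u:ℝ) + t * I))
      - ((∫ t : ℝ in (0:ℝ)..x, h (t + I)) + I • ∫ t : ℝ in (1:ℝ)..y, h ((x:ℝ) + t * I)) = _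
  have hH0u : IntervalIntegrable (fun t : ℝ => h (t + 1 * I)) volume 0 u :=
    integrable_hor hcont one_pos
  have hH0x : IntervalIntegrable (fun t : ℝ => h (t + 1 * I)) volume 0 x :=
    integrable_hor hcont one_pos
  have hV1v : IntervalIntegrable (fun t : ℝ => h ((u:ℝ) + t * I)) volume 1 v :=
    integrable_ver hcont one_pos hw
  have hV1y : IntervalIntegrable (fun t : ℝ => h ((u:ℝ) + t * I)) volume 1 y :=
    integrable_ver hcont one_pos hz
  have hone : ∀ t : ℝ, ((t:ℂ) + I) = (t:ℂ) + (1:ℝ) * I := by intro t; simp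
  have e1 : (∫ t : ℝ in (0:ℝ)..u, h (t + I)) - (∫ t : ℝ in (0:ℝ)..x, h (t + I))
      = ∫ t : ℝ in x..u, h (t + (1:ℝ) * I) := by
    simp_rw [hone]
    exact intervalIntegral.integral_interval_sub_left hH0u hH0x
  have e2 : (∫ t : ℝ in (1:ℝ)..v, h ((u:ℝ) + t * I)) - (∫ t : ℝ in (1:ℝ)..y, h ((u:ℝ) + t * I))
      = ∫ t : ℝ in y..v, h ((u:ℝ) + t * I) :=
    intervalIntegral.integral_interval_sub_left hV1v hV1y
  -- combine
  have goursat' : (∫ t : ℝ in x..u, h (t + (1:ℝ) * I)) - I • ∫ t : ℝ in (1:ℝ)..y, h ((x:ℝ) + t * I)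
      = (∫ t : ℝ in x..u, h (t + (y:ℝ) * I)) - I • ∫ t : ℝ in (1:ℝ)..y, h ((u:ℝ) + t * I) := by
    linear_combination goursat
  calc ((∫ t : ℝ in (0:ℝ)..u, h (t + I)) + I • ∫ t : ℝ in (1:ℝ)..v, h ((u:ℝ) + t * I))
      - ((∫ t : ℝ in (0:ℝ)..x, h (t + I)) + I • ∫ t : ℝ in (1:ℝ)..y, h ((x:ℝ) + t * I))
      = ((∫ t : ℝ in x..u, h (t + (1:ℝ) * I)) - I • ∫ t : ℝ in (1:ℝ)..y, h ((x:ℝ) + t * I))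
        + I • ((∫ t : ℝ in (1:ℝ)..v, h ((u:ℝ) + t * I))
          - (∫ t : ℝ in (1:ℝ)..y, h ((u:ℝ) + t * I)))
        + I • ∫ t : ℝ in (1:ℝ)..y, h ((u:ℝ) + t * I) := by
        rw [← e1, smul_sub]; abel
    _ = (∫ t : ℝ in x..u, h (t + (y:ℝ) * I)) + I • ∫ t : ℝ in y..v, h ((u:ℝ) + t * I) := by
        rw [goursat', e2]; ring

lemma prim_hasDerivAt {h : ℂ → ℂ} (hcont : ContinuousOn h {z : ℂ | 0 < z.im})
    (hdiff : DifferentiableOn ℂ h {z : ℂ | 0 < z.im}) {z : ℂ} (hz : 0 < z.im) :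
    HasDerivAt (prim h) (h z) z := by
  rw [hasDerivAt_iff_isLittleO, Asymptotics.isLittleO_iff]
  intro ε hε
  have hUz : {w : ℂ | 0 < w.im} ∈ nhds z := isOpenU'.mem_nhds hz
  have hcz : ContinuousAt h z := hcont.continuousAt hUz
  rcases Metric.mem_nhds_iff.1 hUz with ⟨δ₀, hδ₀, hball⟩
  have hεpos : (0:ℝ) < ε / 2 := by linarith
  rcases Metric.continuousAt_iff.1 hcz (ε/2) hεpos with ⟨δ₁, hδ₁, hcb⟩
  set δ := min (δ₀/3) (δ₁/3) with hδdef
  have hδpos : 0 < δ := lt_min (by linarith) (by linarith)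
  filter_upwards [Metric.ball_mem_nhds z hδpos] with w hwball
  have hwz : dist w z < δ := Metric.mem_ball.1 hwball
  have hwU : 0 < w.im := by
    have : w ∈ Metric.ball z δ₀ := Metric.mem_ball.1 (by
      refine Metric.mem_ball.2 (lt_of_lt_of_le hwz ?_)
      calc δ ≤ δ₀/3 := min_le_left _ _
        _ ≤ δ₀ := by linarith)
    exact hball this
  -- points on the L-path are within 2*dist of z
  have hkey := prim_sub hcont hdiff hz hwU
  have hre : |w.re - z.re| ≤ dist w z := by
    rw [dist_eq_norm]; simpa using Complex.abs_re_le_norm (w - z)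
  have him : |w.im - z.im| ≤ dist w z := by
    rw [dist_eq_norm]; simpa using Complex.abs_im_le_norm (w - z)
  -- bound each point on horizontal segment
  have hbound1 : ∀ t ∈ Ι z.re w.re, ‖h ((t:ℝ) + (z.im:ℝ) * I) - h z‖ ≤ ε/2 := by
    intro t ht
    rw [Set.mem_uIoc] at ht
    have ht' : |t - z.re| ≤ |w.re - z.re| := by
      rcases ht with ht | ht
      · rw [_root_.abs_of_nonneg (by linarith [ht.1] : (0:ℝ) ≤ t - z.re)]
        rw [_root_.abs_of_nonneg (by linarith [ht.1, ht.2] : (0:ℝ) ≤ w.re - z.re)]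
        linarith [ht.2]
      · rw [_root_.abs_of_nonpos (by linarith [ht.2] : t - z.re ≤ 0)]
        rw [_root_.abs_of_nonpos (by linarith [ht.1, ht.2] : w.re - z.re ≤ 0)]
        linarith [ht.1]
    have hdist : dist ((t:ℂ) + (z.im:ℝ) * I) z < δ₁ := by
      have e : ((t:ℂ) + (z.im:ℝ) * I) - z = ((t - z.re : ℝ):ℂ) := by
        apply Complex.ext <;> simp
      rw [Complex.dist_eq, e, Complex.norm_real, Real.norm_eq_abs]
      calc |t - z.re| ≤ dist w z := le_trans ht' hre
        _ < δ := hwz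
        _ ≤ δ₁ := le_trans (min_le_right _ _) (by linarith)
    exact le_of_lt (by simpa [dist_eq_norm] using hcb hdist)
  have hbound2 : ∀ t ∈ Ι z.im w.im, ‖h ((w.re:ℝ) + t * I) - h z‖ ≤ ε/2 := by
    intro t ht
    rw [Set.mem_uIoc] at ht
    have ht' : |t - z.im| ≤ |w.im - z.im| := by
      rcases ht with ht | ht
      · rw [_root_.abs_of_nonneg (by linarith [ht.1] : (0:ℝ) ≤ t - z.im)]
        rw [_root_.abs_of_nonneg (by linarith [ht.1, ht.2] : (0:ℝ) ≤ w.im - z.im)]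
        linarith [ht.2]
      · rw [_root_.abs_of_nonpos (by linarith [ht.2] : t - z.im ≤ 0)]
        rw [_root_.abs_of_nonpos (by linarith [ht.1, ht.2] : w.im - z.im ≤ 0)]
        linarith [ht.1]
    have hdist : dist ((w.re:ℂ) + t * I) z < δ₁ := by
      have heq : dist ((w.re:ℂ) + t * I) z ≤ |w.re - z.re| + |t - z.im| := by
        rw [Complex.dist_eq]
        calc ‖(w.re:ℂ) + t * I - z‖
            = ‖((w.re - z.re:ℝ):ℂ) + ((t - z.im:ℝ):ℂ) * I‖ := by
              congr 1; apply Complex.ext <;> simp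
          _ ≤ ‖((w.re - z.re:ℝ):ℂ)‖ + ‖((t - z.im:ℝ):ℂ) * I‖ := by
              apply norm_add_le
          _ = |w.re - z.re| + |t - z.im| := by
              simp only [norm_mul, Complex.norm_I, mul_one, Complex.norm_real, Real.norm_eq_abs]
      calc dist ((w.re:ℂ) + t * I) z ≤ |w.re - z.re| + |t - z.im| := heq
        _ ≤ dist w z + dist w z := add_le_add hre (le_trans ht' him)
        _ < 2 * δ := by linarith
        _ ≤ δ₁ := by
            calc 2 * δ ≤ 2 * (δ₁/3) := by
                  have := min_le_right (δ₀/3) (δ₁/3); linarith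
              _ ≤ δ₁ := by linarith
    exact le_of_lt (by simpa [dist_eq_norm] using hcb hdist)
  -- now the estimate
  have hsplit : prim h w - prim h z - (w - z) • h z
      = (∫ t : ℝ in z.re..w.re, (h ((t:ℝ) + (z.im:ℝ) * I) - h z))
        + I • ∫ t : ℝ in z.im..w.im, (h ((w.re:ℝ) + t * I) - h z) := by
    rw [hkey]
    have i1 : IntervalIntegrable (fun t : ℝ => h ((t:ℝ) + (z.im:ℝ) * I)) volume z.re w.re :=
      integrable_hor hcont hz
    have i2 : IntervalIntegrable (fun t : ℝ => h ((w.re:ℝ) + t * I)) volume z.im w.im :=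
      integrable_ver hcont hz hwU
    rw [intervalIntegral.integral_sub i1 intervalIntegrable_const,
      intervalIntegral.integral_sub i2 intervalIntegrable_const]
    simp only [intervalIntegral.integral_const]
    rw [smul_sub]
    have : (w - z) • h z = ((w.re - z.re : ℝ) • h z) + I • ((w.im - z.im : ℝ) • h z) := by
      simp only [Complex.real_smul, smul_eq_mul]
      have e : w - z = ((w.re - z.re : ℝ):ℂ) + I * ((w.im - z.im : ℝ):ℂ) := by
        apply Complex.ext <;> simp
      rw [e]; ring
    rw [this]; abel
  rw [hsplit]
  calc ‖(∫ t : ℝ in z.re..w.re, (h ((t:ℝ) + (z.im:ℝ) * I) - h z))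
        + I • ∫ t : ℝ in z.im..w.im, (h ((w.re:ℝ) + t * I) - h z)‖
      ≤ ‖∫ t : ℝ in z.re..w.re, (h ((t:ℝ) + (z.im:ℝ) * I) - h z)‖
        + ‖I • ∫ t : ℝ in z.im..w.im, (h ((w.re:ℝ) + t * I) - h z)‖ := norm_add_le _ _
    _ ≤ ε/2 * |w.re - z.re| + ε/2 * |w.im - z.im| := by
        gcongr
        · exact intervalIntegral.norm_integral_le_of_norm_le_const hbound1
        · rw [norm_smul]
          simp only [Complex.norm_I, one_mul]
          exact intervalIntegral.norm_integral_le_of_norm_le_const hbound2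
    _ ≤ ε/2 * ‖w - z‖ + ε/2 * ‖w - z‖ := by
        gcongr
        · simpa [dist_eq_norm] using hre
        · simpa [dist_eq_norm] using him
    _ = ε * ‖w - z‖ := by ring


section main
variable {g : ℂ → ℝ} (hg : HarmonicOnUHP g)

lemma hd_contOn (hg : HarmonicOnUHP g) : ContinuousOn (hd g) {z : ℂ | 0 < z.im} := by
  have hf : ContinuousOn (fderiv ℝ g) {z : ℂ | 0 < z.im} :=
    hg.1.continuousOn_fderiv_of_isOpen isOpenU (by norm_num)
  have h1 : ContinuousOn (fun z => fderiv ℝ g z 1) {z : ℂ | 0 < z.im} :=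
    hf.clm_apply continuousOn_const
  have h2 : ContinuousOn (fun z => fderiv ℝ g z I) {z : ℂ | 0 < z.im} :=
    hf.clm_apply continuousOn_const
  exact (Complex.continuous_ofReal.comp_continuousOn h1).sub
    (continuousOn_const.mul (Complex.continuous_ofReal.comp_continuousOn h2))

lemma hd_diffOn (hg : HarmonicOnUHP g) : DifferentiableOn ℂ (hd g) {z : ℂ | 0 < z.im} :=
  fun z hz => (hd_diff hg hz).differentiableWithinAt

lemma g_eq_re_prim (hg : HarmonicOnUHP g) {z : ℂ} (hz : 0 < z.im) :
    g z - (prim (hd g) z).re = g I - (prim (hd g) I).re := by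
  set φ : ℂ → ℝ := fun w => g w - (prim (hd g) w).re with hφdef
  have hIU : (0:ℝ) < (I:ℂ).im := by simp
  have key : ∀ w ∈ {z : ℂ | 0 < z.im}, HasFDerivAt φ (0 : ℂ →L[ℝ] ℝ) w := by
    intro w hw
    have hw' : 0 < w.im := hw
    have hder := prim_hasDerivAt (hd_contOn hg) (hd_diffOn hg) hw'
    have hF : HasFDerivAt (prim (hd g))
        ((ContinuousLinearMap.smulRight (1 : ℂ →L[ℂ] ℂ) (hd g w)).restrictScalars ℝ) w :=
      hder.hasFDerivAt.restrictScalars ℝ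
    have hRe : HasFDerivAt (fun u => (prim (hd g) u).re)
        (Complex.reCLM.comp ((ContinuousLinearMap.smulRight (1 : ℂ →L[ℂ] ℂ)
          (hd g w)).restrictScalars ℝ)) w := Complex.reCLM.hasFDerivAt.comp w hF
    have hgw : HasFDerivAt g (fderiv ℝ g w) w := by
      have : ContDiffAt ℝ 2 g w := hg.1.contDiffAt (isOpenU.mem_nhds hw)
      exact ((this.differentiableAt (by norm_num)).hasFDerivAt)
    have hφ' := hgw.sub hRe
    refine hφ'.congr_fderiv ?_
    apply ContinuousLinearMap.ext
    intro x
    rw [realCLM_apply (fderiv ℝ g w - Complex.reCLM.comp _) x]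
    have e1 : (fderiv ℝ g w - Complex.reCLM.comp
        ((ContinuousLinearMap.smulRight (1 : ℂ →L[ℂ] ℂ) (hd g w)).restrictScalars ℝ)) 1 = 0 := by
      simp [hd]
    have e2 : (fderiv ℝ g w - Complex.reCLM.comp
        ((ContinuousLinearMap.smulRight (1 : ℂ →L[ℂ] ℂ) (hd g w)).restrictScalars ℝ)) I = 0 := by
      simp [hd]
    rw [e1, e2]
    simp
  have hconv : Convex ℝ {z : ℂ | 0 < z.im} := convex_halfSpace_im_gt 0
  have hdiffφ : DifferentiableOn ℝ φ {z : ℂ | 0 < z.im} :=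
    fun w hw => ((key w hw).differentiableAt).differentiableWithinAt
  have hbound : ∀ w ∈ {z : ℂ | 0 < z.im}, ‖fderivWithin ℝ φ {z : ℂ | 0 < z.im} w‖ ≤ 0 := by
    intro w hw
    rw [fderivWithin_of_isOpen isOpenU hw, (key w hw).fderiv]
    simp
  have h0 := hconv.norm_image_sub_le_of_norm_fderivWithin_le hdiffφ hbound
    (show (I:ℂ) ∈ {z : ℂ | 0 < z.im} from hIU) (show z ∈ {z : ℂ | 0 < z.im} from hz)
  have h1 : φ z = φ I := by rwa [zero_mul, norm_le_zero_iff, sub_eq_zero] at h0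
  exact h1

end main

lemma arith_key (y t a u s : ℝ) (hy : 1 < y) (ht : t * (y+1) = y - 1) (ha : 0 < a)
    (hu : 0 < u) (hs : 0 ≤ s) (h1 : (u - a)^2 + s ≤ t^2 * ((u + a)^2 + s)) : a ≤ y * u := by
  have ht2 : t^2 * (y+1)^2 = (y-1)^2 := by nlinarith [ht]
  have h2 : (y+1)^2 * ((u - a)^2 + s) ≤ (y-1)^2 * ((u + a)^2 + s) := by nlinarith [h1]
  by_contra hc
  push_neg at hc
  have hf1 : (0:ℝ) < y*a - u := by nlinarith
  have hf2 : (0:ℝ) < a - y*u := by linarith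
  nlinarith [h2, mul_pos hf1 hf2]

noncomputable def cay (w : ℂ) : ℂ := I * ((1 + w) / (1 - w))

lemma cay_im_pos {w : ℂ} (hw : w ∈ ball (0:ℂ) 1) : 0 < (cay w).im := by
  have hw1 : ‖w‖ < 1 := by simpa using mem_ball_zero_iff.1 hw
  have hne : (1:ℂ) - w ≠ 0 := by
    intro hc
    have : w = 1 := by linear_combination -hc
    rw [this] at hw1; simp at hw1
  have hN : 0 < Complex.normSq (1 - w) := Complex.normSq_pos.2 hne
  have hlt : Complex.normSq w < 1 := by
    rw [Complex.normSq_eq_norm_sq]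
    nlinarith [norm_nonneg w, hw1]
  have : (cay w).im = ((1 + w) / (1 - w)).re := by simp [cay]
  rw [this, Complex.div_re]
  have h1 : (1 + w).re * (1 - w).re / Complex.normSq (1 - w)
      + (1 + w).im * (1 - w).im / Complex.normSq (1 - w)
      = (1 - Complex.normSq w) / Complex.normSq (1 - w) := by
    rw [← add_div]
    congr 1
    simp [Complex.normSq_apply]
    ring
  rw [h1]
  exact div_pos (by linarith) hN

lemma cay_zero : cay 0 = I := by simp [cay]

lemma cay_real {y : ℝ} (hy : 1 < y) : cay (((y-1)/(y+1) : ℝ) : ℂ) = I * y := by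
  have h1 : ((y:ℂ) + 1) ≠ 0 := by
    intro hc
    have := congrArg Complex.re hc
    simp at this; linarith
  have h2 : ((((y-1)/(y+1):ℝ)):ℂ) = ((y:ℂ)-1)/((y:ℂ)+1) := by push_cast; ring
  rw [cay, h2]
  have h3 : (1:ℂ) - ((y:ℂ)-1)/((y:ℂ)+1) ≠ 0 := by
    rw [sub_ne_zero]
    intro hc
    have := congrArg (fun z => z * ((y:ℂ)+1)) hc
    rw [one_mul, div_mul_cancel₀ _ h1] at this
    have := congrArg Complex.re this
    simp at this; linarith
  field_simp
  ring

lemma cay_diff : DifferentiableOn ℂ cay (ball (0:ℂ) 1) := by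
  apply DifferentiableOn.const_mul
  apply DifferentiableOn.div
  · exact (differentiable_const _).add differentiable_id |>.differentiableOn
  · exact (differentiable_const _).sub differentiable_id |>.differentiableOn
  · intro w hw
    have hw1 : ‖w‖ < 1 := by simpa using mem_ball_zero_iff.1 hw
    intro hc
    have : w = 1 := by linear_combination -hc
    rw [this] at hw1; simp at hw1

-- norm comparison: Re p > 0, Re q > 0 ⇒ |p - q| < |p + conj q|
lemma num_lt_den {p q : ℂ} (hp : 0 < p.re) (hq : 0 < q.re) :
    ‖p - q‖ < ‖p + (starRingEnd ℂ) q‖ := by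
  have h1 : Complex.normSq (p - q) < Complex.normSq (p + (starRingEnd ℂ) q) := by
    simp only [Complex.normSq_apply, Complex.sub_re, Complex.sub_im, Complex.add_re,
      Complex.add_im, Complex.conj_re, Complex.conj_im]
    nlinarith [hp, hq]
  nlinarith [Complex.sq_norm (p - q), Complex.sq_norm (p + (starRingEnd ℂ) q),
    norm_nonneg (p - q), norm_nonneg (p + (starRingEnd ℂ) q), h1]


theorem stmt0 (g : ℂ → ℝ) (hg : HarmonicOnUHP g)
    (hpos : ∀ z : ℂ, 0 < z.im → 0 ≤ g z)
    (hlim : Tendsto (fun y : ℝ => y * g (Complex.I * y)) atTop (nhds 0)) :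
    ∀ z : ℂ, 0 < z.im → g z = 0 := by
  have hconv : Convex ℝ {z : ℂ | 0 < z.im} := convex_halfSpace_im_gt 0
  set F : ℂ → ℂ := fun z => prim (hd g) z + ((g I - (prim (hd g) I).re : ℝ) : ℂ) with hF
  have hFdiff : DifferentiableOn ℂ F {z : ℂ | 0 < z.im} := fun z hz =>
    (((prim_hasDerivAt (hd_contOn hg) (hd_diffOn hg)
      hz).differentiableAt).add_const _).differentiableWithinAt
  have hFre : ∀ z : ℂ, 0 < z.im → (F z).re = g z := by
    intro z hz
    have h := g_eq_re_prim hg hz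
    simp only [hF, Complex.add_re, Complex.ofReal_re]
    linarith
  by_cases hex : ∃ z₀ : ℂ, 0 < z₀.im ∧ g z₀ = 0
  · obtain ⟨z₀, hz₀, hg0⟩ := hex
    intro z hz
    set E : ℂ → ℂ := fun w => Complex.exp (-F w) with hE
    have hEdiff : DifferentiableOn ℂ E {z : ℂ | 0 < z.im} := (hFdiff.neg).cexp
    have hmax : IsMaxOn (norm ∘ E) {z : ℂ | 0 < z.im} z₀ := by
      apply isMaxOn_iff.2
      intro w hw
      simp only [Function.comp_apply, hE, Complex.norm_exp, Complex.neg_re]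
      rw [hFre w hw, hFre z₀ hz₀, hg0]
      exact Real.exp_le_exp.2 (by linarith [hpos w hw])
    have heq := Complex.eqOn_of_isPreconnected_of_isMaxOn_norm hconv.isPreconnected isOpenU
      hEdiff hz₀ hmax
    have hz' := heq hz
    have habs : Real.exp (-g z) = Real.exp (-g z₀) := by
      have h2 := congrArg norm hz'
      simpa [hE, Complex.norm_exp, Complex.neg_re, hFre z hz, hFre z₀ hz₀] using h2
    have := Real.exp_eq_exp.1 habs
    linarith [hg0]
  · push_neg at hex
    have hgpos : ∀ w : ℂ, 0 < w.im → 0 < g w := fun w hw =>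
      lt_of_le_of_ne (hpos w hw) (Ne.symm (hex w hw))
    exfalso
    set G : ℂ → ℂ := fun w => F (cay w) with hG
    have hmapsTo : MapsTo cay (ball (0:ℂ) 1) {z : ℂ | 0 < z.im} := fun w hw => cay_im_pos hw
    have hGdiff : DifferentiableOn ℂ G (ball 0 1) := hFdiff.comp cay_diff hmapsTo
    have hGre : ∀ w ∈ ball (0:ℂ) 1, (G w).re = g (cay w) := fun w hw => hFre _ (cay_im_pos hw)
    have hGpos : ∀ w ∈ ball (0:ℂ) 1, 0 < (G w).re := fun w hw =>
      (hGre w hw) ▸ hgpos _ (cay_im_pos hw)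
    have h0mem : (0:ℂ) ∈ ball (0:ℂ) 1 := by simp
    set q := G 0 with hq
    have hqre : 0 < q.re := hGpos 0 h0mem
    have hqgI : q.re = g I := by rw [hq, hGre 0 h0mem, cay_zero]
    set H : ℂ → ℂ := fun w => (G w - q)/(G w + (starRingEnd ℂ) q) with hH
    have hden : ∀ w ∈ ball (0:ℂ) 1, G w + (starRingEnd ℂ) q ≠ 0 := by
      intro w hw hc
      have h2 := congrArg Complex.re hc
      simp only [Complex.add_re, Complex.conj_re, Complex.zero_re] at h2
      nlinarith [hGpos w hw, hqre]
    have hHdiff : DifferentiableOn ℂ H (ball 0 1) :=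
      (hGdiff.sub_const _).div (hGdiff.add_const _) hden
    have hH0 : H 0 = 0 := by
        show (G 0 - q) / (G 0 + (starRingEnd ℂ) q) = 0
        rw [← hq, sub_self, zero_div]
    have hmaps : MapsTo H (ball (0:ℂ) 1) (ball (0:ℂ) 1) := by
      intro w hw
      rw [mem_ball_zero_iff]
      simp only [hH, norm_div]
      rw [div_lt_one (norm_pos_iff.mpr (hden w hw))]
      exact num_lt_den (hGpos w hw) hqre
    have ha : 0 < g I := hgpos I (by simp)
    have hev : ∀ᶠ y : ℝ in Filter.atTop, g I ≤ y * g (Complex.I * y) := by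
      filter_upwards [Filter.eventually_gt_atTop 1] with y hy
      set t : ℝ := (y-1)/(y+1) with htdef
      have hy0 : (0:ℝ) < y + 1 := by linarith
      have ht0 : 0 ≤ t := div_nonneg (by linarith) (by linarith)
      have ht1 : t < 1 := by rw [htdef, div_lt_one hy0]; linarith
      have habst : ‖((t:ℝ):ℂ)‖ = t := by
        simp [Complex.norm_real, _root_.abs_of_nonneg ht0]
      have hwmem : ((t:ℝ):ℂ) ∈ ball (0:ℂ) 1 := by
        rw [mem_ball_zero_iff, habst]; exact ht1
      have hsch := Complex.norm_le_norm_of_mapsTo_ball hHdiff (hmaps.mono_right ball_subset_closedBall) hH0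
        (show ‖((t:ℝ):ℂ)‖ < 1 by rw [habst]; exact ht1)
      rw [habst] at hsch
      set p := G ((t:ℝ):ℂ) with hp
      have hpre : p.re = g (Complex.I * y) := by
        rw [hp, hGre _ hwmem, cay_real hy]
      have hppos : 0 < p.re := hGpos _ hwmem
      have hnum : ‖p - q‖ ≤ t * ‖p + (starRingEnd ℂ) q‖ := by
        have habs2 : ‖H ((t:ℝ):ℂ)‖ ≤ t := hsch
        rw [hH] at habs2
        simp only [norm_div] at habs2
        exact (div_le_iff₀ (norm_pos_iff.mpr (hden _ hwmem))).1 habs2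
      have e1 : ‖p - q‖^2 = (p.re - q.re)^2 + (p.im - q.im)^2 := by
        rw [Complex.sq_norm, Complex.normSq_apply, Complex.sub_re, Complex.sub_im]
        ring
      have e2 : ‖p + (starRingEnd ℂ) q‖^2 = (p.re + q.re)^2 + (p.im - q.im)^2 := by
        rw [Complex.sq_norm, Complex.normSq_apply, Complex.add_re, Complex.add_im,
          Complex.conj_re, Complex.conj_im]
        ring
      have hsq : (p.re - q.re)^2 + (p.im - q.im)^2
          ≤ t^2 * ((p.re + q.re)^2 + (p.im - q.im)^2) := by
        nlinarith [mul_le_mul hnum hnum (norm_nonneg _)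
          (mul_nonneg ht0 (norm_nonneg _)), e1, e2]
      rw [hqgI] at hsq
      have hkey := arith_key y t (g I) p.re ((p.im - q.im)^2) hy
        (by rw [htdef]; field_simp) ha hppos (sq_nonneg _) hsq
      rw [hpre] at hkey
      exact hkey
    have hfin := ge_of_tendsto hlim hev
    linarith
end

section
/- For all a > 1 and T > 0, the principal-value integrals ∫_a^{3a} exp(iT(ξ + ξ⁻¹))/(ξ - 2a) dξ are uniformly bounded. -/
open MeasureTheory Filter Set

noncomputable def gg (T ξ : ℝ) : ℂ := Complex.exp (Complex.I * (T : ℂ) * ((ξ : ℂ) + (ξ : ℂ)⁻¹))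

lemma gg_eq (T ξ : ℝ) : gg T ξ = Complex.exp (Complex.I * ((T * (ξ + ξ⁻¹) : ℝ) : ℂ)) := by
  unfold gg; push_cast; ring_nf

lemma norm_gg (T ξ : ℝ) : ‖gg T ξ‖ = 1 := by
  rw [gg_eq, Complex.norm_exp]; simp

lemma hasDerivAt_gg (T : ℝ) {ξ : ℝ} (hξ : ξ ≠ 0) :
    HasDerivAt (gg T) (Complex.I * ((T * (1 - (ξ ^ 2)⁻¹) : ℝ) : ℂ) * gg T ξ) ξ := by
  have h1 : HasDerivAt (fun ξ : ℝ => T * (ξ + ξ⁻¹)) (T * (1 - (ξ ^ 2)⁻¹)) ξ := by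
    have := ((hasDerivAt_id ξ).add (hasDerivAt_inv hξ)).const_mul T
    simpa [sub_eq_add_neg] using this
  have h2 := ((h1.ofReal_comp).const_mul Complex.I).cexp
  have h3 : (fun ξ : ℝ => Complex.exp (Complex.I * ((T * (ξ + ξ⁻¹) : ℝ) : ℂ))) = gg T := by
    funext x; rw [gg_eq]
  rw [h3] at h2
  rw [gg_eq]; convert h2 using 1; ring

lemma gg_lip {T : ℝ} (hT : 0 ≤ T) {x y : ℝ} (hx : 1 ≤ x) (hy : 1 ≤ y) :
    ‖gg T x - gg T y‖ ≤ T * |x - y| := by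
  have key := Convex.norm_image_sub_le_of_norm_hasDerivWithin_le
    (f := gg T) (f' := fun ξ => Complex.I * ((T * (1 - (ξ ^ 2)⁻¹) : ℝ) : ℂ) * gg T ξ)
    (s := Set.Ici (1:ℝ)) (C := T) ?_ ?_ (convex_Ici 1) hy hx
  · simpa [Real.norm_eq_abs, abs_sub_comm] using key
  · intro z hz
    exact (hasDerivAt_gg T (by simp at hz; positivity)).hasDerivWithinAt
  · intro z hz
    simp only [Set.mem_Ici] at hz
    have hz2 : (1:ℝ) ≤ z^2 := one_le_pow₀ hz
    rw [norm_mul, norm_mul, norm_gg, Complex.norm_I, Complex.norm_real, Real.norm_eq_abs]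
    have : |T * (1 - (z ^ 2)⁻¹)| ≤ T := by
      rw [abs_mul, abs_of_nonneg hT]
      have h1 : (z^2)⁻¹ ≤ 1 := by
        rw [inv_le_one_iff₀]; right; exact hz2
      have h2 : 0 ≤ (z^2)⁻¹ := by positivity
      nlinarith [abs_of_nonneg (by linarith : (0:ℝ) ≤ 1 - (z^2)⁻¹)]
    simpa using this

lemma continuousOn_gg (T : ℝ) {s : Set ℝ} (hs : ∀ x ∈ s, x ≠ 0) : ContinuousOn (gg T) s :=
  fun x hx => (hasDerivAt_gg T (hs x hx)).continuousAt.continuousWithinAt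

lemma ibp (T : ℝ) {α β : ℝ} (h1 : 1 ≤ α) (hαβ : α ≤ β) (v v' : ℝ → ℂ)
    (hv : ∀ ξ ∈ Set.Icc α β, HasDerivAt v (v' ξ) ξ)
    (hv' : ContinuousOn v' (Set.Icc α β)) :
    ‖∫ ξ in α..β, Complex.I * ((T * (1 - (ξ ^ 2)⁻¹) : ℝ) : ℂ) * gg T ξ * v ξ‖ ≤
      ‖v α‖ + ‖v β‖ + ∫ ξ in α..β, ‖v' ξ‖ := by
  have hIcc : Set.uIcc α β = Set.Icc α β := Set.uIcc_of_le hαβ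
  have hne : ∀ x ∈ Set.Icc α β, x ≠ (0:ℝ) := fun x hx => by
    have := hx.1; intro h; rw [h] at this; linarith
  set u' : ℝ → ℂ := fun ξ => Complex.I * ((T * (1 - (ξ ^ 2)⁻¹) : ℝ) : ℂ) * gg T ξ with hu'
  have hu : ∀ x ∈ Set.uIcc α β, HasDerivAt (gg T) (u' x) x := by
    intro x hx; rw [hIcc] at hx; exact hasDerivAt_gg T (hne x hx)
  have hvv : ∀ x ∈ Set.uIcc α β, HasDerivAt v (v' x) x := by
    intro x hx; rw [hIcc] at hx; exact hv x hx
  have hcu' : ContinuousOn u' (Set.Icc α β) := by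
    apply ContinuousOn.mul ?_ (continuousOn_gg T hne)
    apply ContinuousOn.mul continuousOn_const
    apply Complex.continuous_ofReal.comp_continuousOn
    apply ContinuousOn.mul continuousOn_const
    exact (continuousOn_const.sub ((continuousOn_pow 2).inv₀ (fun x hx => pow_ne_zero 2 (hne x hx))))
  have hcv : ContinuousOn v (Set.Icc α β) := fun x hx => (hv x hx).continuousAt.continuousWithinAt
  have hcg : ContinuousOn (gg T) (Set.Icc α β) := continuousOn_gg T hne
  have hiu' : IntervalIntegrable u' volume α β := by
    apply ContinuousOn.intervalIntegrable; rw [hIcc]; exact hcu'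
  have hiv' : IntervalIntegrable v' volume α β := by
    apply ContinuousOn.intervalIntegrable; rw [hIcc]; exact hv'
  have hiu'v : IntervalIntegrable (fun x => u' x * v x) volume α β := by
    apply ContinuousOn.intervalIntegrable; rw [hIcc]; exact hcu'.mul hcv
  have hiuv' : IntervalIntegrable (fun x => gg T x * v' x) volume α β := by
    apply ContinuousOn.intervalIntegrable; rw [hIcc]; exact hcg.mul hv'
  have key := intervalIntegral.integral_deriv_mul_eq_sub hu hvv hiu' hiv'
  rw [intervalIntegral.integral_add hiu'v hiuv'] at key
  have heq : ∫ ξ in α..β, u' ξ * v ξ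
      = gg T β * v β - gg T α * v α - ∫ x in α..β, gg T x * v' x := by
    rw [eq_sub_iff_add_eq]; exact key
  calc ‖∫ ξ in α..β, u' ξ * v ξ‖
      = ‖gg T β * v β - gg T α * v α - ∫ x in α..β, gg T x * v' x‖ := by rw [heq]
    _ ≤ ‖gg T β * v β‖ + ‖gg T α * v α‖ + ‖∫ x in α..β, gg T x * v' x‖ := by
        exact (norm_sub_le _ _).trans (by gcongr; exact norm_sub_le _ _)
    _ ≤ ‖v α‖ + ‖v β‖ + ∫ ξ in α..β, ‖v' ξ‖ := by
        have h1 : ‖gg T β * v β‖ = ‖v β‖ := by rw [norm_mul, norm_gg, one_mul]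
        have h2 : ‖gg T α * v α‖ = ‖v α‖ := by rw [norm_mul, norm_gg, one_mul]
        have h3 : ‖∫ x in α..β, gg T x * v' x‖ ≤ ∫ ξ in α..β, ‖v' ξ‖ := by
          refine (intervalIntegral.norm_integral_le_integral_norm hαβ).trans_eq ?_
          apply intervalIntegral.integral_congr
          intro x hx
          simp only [norm_mul, norm_gg, one_mul]
        linarith

lemma osc {a T α β m : ℝ} (ha : 1 < a) (hT : 0 < T) (hαβ : α ≤ β)
    (hsub : Set.Icc α β ⊆ Set.Icc (3*a/2) (5*a/2))
    (h2a : ∀ ξ ∈ Set.Icc α β, ξ ≠ 2*a)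
    (hm : 0 < m) (hmα : m ≤ |α - 2*a|) (hmβ : m ≤ |β - 2*a|) :
    ‖∫ ξ in α..β, gg T ξ / ((ξ:ℂ) - ((2*a : ℝ) : ℂ))‖ ≤ 8 / (T*m) := by
  have hmemα : α ∈ Set.Icc α β := ⟨le_refl _, hαβ⟩
  have hmemβ : β ∈ Set.Icc α β := ⟨hαβ, le_refl _⟩
  -- basic bounds
  have hb : ∀ ξ ∈ Set.Icc α β, 3/2 ≤ ξ ∧ ξ ≤ 5*a/2 := by
    intro ξ hξ
    obtain ⟨h1, h2⟩ := hsub hξ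
    constructor
    · linarith
    · linarith
  have hφ : ∀ ξ ∈ Set.Icc α β, 5/9 ≤ 1 - (ξ^2)⁻¹ := by
    intro ξ hξ
    obtain ⟨h1, _⟩ := hb ξ hξ
    have h2 : (9:ℝ)/4 ≤ ξ^2 := by nlinarith
    have h3 : (ξ^2)⁻¹ ≤ 4/9 := by
      rw [inv_le_comm₀ (by nlinarith) (by norm_num)]
      linarith
    linarith
  have hne0 : ∀ ξ ∈ Set.Icc α β, ξ ≠ (0:ℝ) := by
    intro ξ hξ; have := (hb ξ hξ).1; intro h; rw [h] at this; norm_num at this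
  have h1α : 1 ≤ α := by have := (hb α hmemα).1; linarith
  set p : ℝ → ℝ := fun ξ => (1 - (ξ^2)⁻¹) * (ξ - 2*a) with hp
  set p' : ℝ → ℝ := fun ξ => 2*(ξ^3)⁻¹ * (ξ - 2*a) + (1 - (ξ^2)⁻¹) with hp'
  have hpne : ∀ ξ ∈ Set.Icc α β, p ξ ≠ 0 := by
    intro ξ hξ
    have h1 := hφ ξ hξ
    have h2 : ξ - 2*a ≠ 0 := sub_ne_zero.mpr (h2a ξ hξ)
    exact mul_ne_zero (by linarith) h2
  have habs : ∀ ξ ∈ Set.Icc α β, (5/9) * |ξ - 2*a| ≤ |p ξ| := by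
    intro ξ hξ
    rw [hp]
    simp only
    rw [abs_mul, abs_of_nonneg (by linarith [hφ ξ hξ] : (0:ℝ) ≤ 1 - (ξ^2)⁻¹)]
    have := hφ ξ hξ
    have := abs_nonneg (ξ - 2*a)
    nlinarith
  have hder : ∀ ξ ∈ Set.Icc α β, HasDerivAt p (p' ξ) ξ := by
    intro ξ hξ
    have hξ0 := hne0 ξ hξ
    have h1 : HasDerivAt (fun ξ : ℝ => 1 - (ξ^2)⁻¹) (2*(ξ^3)⁻¹) ξ := by
      have := ((hasDerivAt_pow 2 ξ).inv (pow_ne_zero 2 hξ0)).const_sub 1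
      exact this.congr_deriv (by norm_num; field_simp)
    have h2 : HasDerivAt (fun ξ : ℝ => ξ - 2*a) 1 ξ := (hasDerivAt_id ξ).sub_const _
    have := h1.mul h2
    exact this.congr_deriv (by simp only [hp']; ring)
  have hp'nn : ∀ ξ ∈ Set.Icc α β, 0 ≤ p' ξ := by
    intro ξ hξ
    obtain ⟨h1, h2⟩ := hb ξ hξ
    have h3 : (3*a/2) ≤ ξ := (hsub hξ).1
    have hξ0 : (0:ℝ) < ξ := by linarith
    have heq : p' ξ = (ξ^3 + ξ - 4*a)/ξ^3 := by
      rw [hp']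
      field_simp
      ring
    rw [heq]
    apply div_nonneg _ (by positivity)
    nlinarith [sq_nonneg a, sq_nonneg (a-1), sq_nonneg ξ, mul_pos hξ0 hξ0]
  -- the weight function
  set v : ℝ → ℂ := fun ξ => (Complex.I * (T:ℂ))⁻¹ * (((p ξ)⁻¹ : ℝ) : ℂ) with hv
  set v' : ℝ → ℂ := fun ξ => (Complex.I * (T:ℂ))⁻¹ * ((-(p' ξ) / (p ξ)^2 : ℝ) : ℂ) with hv'
  have hvder : ∀ ξ ∈ Set.Icc α β, HasDerivAt v (v' ξ) ξ := by
    intro ξ hξ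
    exact (((hder ξ hξ).inv (hpne ξ hξ)).ofReal_comp).const_mul _
  have hp'cont : ContinuousOn p' (Set.Icc α β) := by
    apply ContinuousOn.add
    · exact (continuousOn_const.mul ((continuousOn_pow 3).inv₀
        (fun x hx => pow_ne_zero 3 (hne0 x hx)))).mul
        ((continuousOn_id' _).sub continuousOn_const)
    · exact continuousOn_const.sub ((continuousOn_pow 2).inv₀
        (fun x hx => pow_ne_zero 2 (hne0 x hx)))
  have hpcont : ContinuousOn p (Set.Icc α β) :=
    fun x hx => (hder x hx).continuousAt.continuousWithinAt
  have hv'cont : ContinuousOn v' (Set.Icc α β) := by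
    apply continuousOn_const.mul
    apply Complex.continuous_ofReal.comp_continuousOn
    exact (hp'cont.neg).div (hpcont.pow 2)
      (fun x hx => pow_ne_zero 2 (hpne x hx))
  -- rewrite the integrand
  have hIT : Complex.I * (T:ℂ) ≠ 0 :=
    mul_ne_zero Complex.I_ne_zero (by exact_mod_cast hT.ne')
  have hcongr : ∫ ξ in α..β, gg T ξ / ((ξ:ℂ) - ((2*a : ℝ) : ℂ))
      = ∫ ξ in α..β, Complex.I * ((T * (1 - (ξ ^ 2)⁻¹) : ℝ) : ℂ) * gg T ξ * v ξ := by
    apply intervalIntegral.integral_congr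
    intro ξ hξ
    rw [Set.uIcc_of_le hαβ] at hξ
    have hξ0 := hne0 ξ hξ
    have hφξ : (1 - (ξ^2)⁻¹) ≠ 0 := by have := hφ ξ hξ; intro h; rw [h] at this; norm_num at this
    have hd : ξ - 2*a ≠ 0 := sub_ne_zero.mpr (h2a ξ hξ)
    simp only [hv, hp]
    have hφℂ : ((1 - (ξ^2)⁻¹ : ℝ) : ℂ) ≠ 0 := by exact_mod_cast hφξ
    have hdℂ : ((ξ - 2*a : ℝ) : ℂ) ≠ 0 := by exact_mod_cast hd
    have e1 : ((ξ:ℂ) - ((2*a:ℝ):ℂ)) = ((ξ - 2*a : ℝ):ℂ) := by push_cast; ring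
    have e2 : (((((1 - (ξ^2)⁻¹) * (ξ - 2*a) : ℝ))⁻¹ : ℝ) : ℂ)
        = (((1 - (ξ^2)⁻¹ : ℝ):ℂ))⁻¹ * (((ξ - 2*a : ℝ):ℂ))⁻¹ := by
      rw [Complex.ofReal_inv, Complex.ofReal_mul, mul_inv]
    have e3 : ((T * (1 - (ξ ^ 2)⁻¹) : ℝ) : ℂ) = (T:ℂ) * ((1 - (ξ^2)⁻¹ : ℝ):ℂ) :=
      Complex.ofReal_mul _ _
    rw [e1, e2, e3]
    set A := ((ξ - 2*a : ℝ):ℂ)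
    set B := ((1 - (ξ^2)⁻¹ : ℝ):ℂ)
    have hTc : (T:ℂ) ≠ 0 := by exact_mod_cast hT.ne'
    field_simp
  rw [hcongr]
  have hbound := ibp T h1α hαβ v v' hvder hv'cont
  -- bounds on each term
  have hnormIT : ‖(Complex.I * (T:ℂ))⁻¹‖ = T⁻¹ := by
    rw [norm_inv, norm_mul, Complex.norm_I, one_mul, Complex.norm_real,
      Real.norm_eq_abs, abs_of_pos hT]
  have hval : ∀ ξ ∈ Set.Icc α β, m ≤ |ξ - 2*a| → ‖v ξ‖ ≤ 9/(5*T*m) := by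
    intro ξ hξ hmem
    rw [hv]
    simp only
    rw [norm_mul, hnormIT, Complex.norm_real, Real.norm_eq_abs, abs_inv]
    have h1 : (5/9) * m ≤ |p ξ| := le_trans (by nlinarith) (habs ξ hξ)
    have h2 : (0:ℝ) < (5/9) * m := by positivity
    have h3 : |p ξ|⁻¹ ≤ ((5/9)*m)⁻¹ := by
      apply inv_anti₀ h2 h1
    calc T⁻¹ * |p ξ|⁻¹ ≤ T⁻¹ * ((5/9)*m)⁻¹ := by
          apply mul_le_mul_of_nonneg_left h3 (by positivity)
      _ = 9/(5*T*m) := by field_simp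
  have hint : (∫ ξ in α..β, ‖v' ξ‖) ≤ 18/(5*T*m) := by
    have heq : ∀ ξ ∈ Set.uIcc α β, ‖v' ξ‖ = T⁻¹ * (p' ξ / (p ξ)^2) := by
      intro ξ hξ
      rw [Set.uIcc_of_le hαβ] at hξ
      rw [hv']
      simp only
      rw [norm_mul, hnormIT, Complex.norm_real, Real.norm_eq_abs]
      congr 1
      rw [abs_div, abs_neg, abs_of_nonneg (hp'nn ξ hξ), abs_pow, sq_abs]
    rw [intervalIntegral.integral_congr heq, intervalIntegral.integral_const_mul]
    have hftc : (∫ ξ in α..β, p' ξ / (p ξ)^2) = (p α)⁻¹ - (p β)⁻¹ := by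
      have hF : ∀ ξ ∈ Set.uIcc α β, HasDerivAt (fun ξ => -(p ξ)⁻¹) (p' ξ / (p ξ)^2) ξ := by
        intro ξ hξ
        rw [Set.uIcc_of_le hαβ] at hξ
        have := ((hder ξ hξ).inv (hpne ξ hξ)).neg
        exact this.congr_deriv (by ring)
      have hint2 : IntervalIntegrable (fun ξ => p' ξ / (p ξ)^2) volume α β := by
        apply ContinuousOn.intervalIntegrable
        rw [Set.uIcc_of_le hαβ]
        exact hp'cont.div (hpcont.pow 2) (fun x hx => pow_ne_zero 2 (hpne x hx))
      rw [intervalIntegral.integral_eq_sub_of_hasDerivAt hF hint2]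
      ring
    rw [hftc]
    have hbα : |p α|⁻¹ ≤ 9/(5*m) := by
      have h1 : (5/9) * m ≤ |p α| := le_trans (by nlinarith) (habs α hmemα)
      have h3 := inv_anti₀ (by positivity : (0:ℝ) < (5/9)*m) h1
      calc |p α|⁻¹ ≤ ((5/9)*m)⁻¹ := h3
        _ = 9/(5*m) := by field_simp
    have hbβ : |p β|⁻¹ ≤ 9/(5*m) := by
      have h1 : (5/9) * m ≤ |p β| := le_trans (by nlinarith) (habs β hmemβ)
      have h3 := inv_anti₀ (by positivity : (0:ℝ) < (5/9)*m) h1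
      calc |p β|⁻¹ ≤ ((5/9)*m)⁻¹ := h3
        _ = 9/(5*m) := by field_simp
    have h4 : (p α)⁻¹ - (p β)⁻¹ ≤ |p α|⁻¹ + |p β|⁻¹ := by
      have h5 : (p α)⁻¹ ≤ |p α|⁻¹ := by rw [← abs_inv]; exact le_abs_self _
      have h6 : -(p β)⁻¹ ≤ |p β|⁻¹ := by rw [← abs_inv]; exact neg_le_abs _
      linarith
    calc T⁻¹ * ((p α)⁻¹ - (p β)⁻¹) ≤ T⁻¹ * (9/(5*m) + 9/(5*m)) := by
          apply mul_le_mul_of_nonneg_left (by linarith) (by positivity)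
      _ = 18/(5*T*m) := by field_simp; ring
  have hα := hval α hmemα hmα
  have hβ := hval β hmemβ hmβ
  calc ‖∫ ξ in α..β, Complex.I * ((T * (1 - (ξ ^ 2)⁻¹) : ℝ) : ℂ) * gg T ξ * v ξ‖
      ≤ ‖v α‖ + ‖v β‖ + ∫ ξ in α..β, ‖v' ξ‖ := hbound
    _ ≤ 9/(5*T*m) + 9/(5*T*m) + 18/(5*T*m) := by linarith
    _ ≤ 8/(T*m) := by
        have hTm : (0:ℝ) < T*m := mul_pos hT hm
        have e : 9/(5*T*m) + 9/(5*T*m) + 18/(5*T*m) = 36/(5*(T*m)) := by ring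
        rw [e, div_le_div_iff₀ (by positivity) hTm]
        nlinarith

-- single interval inverse integral
lemma cinv {c u v : ℝ} (h : (0:ℝ) ∉ Set.uIcc (u - c) (v - c)) :
    ∫ ξ in u..v, ((ξ:ℂ) - ((c:ℝ):ℂ))⁻¹ = ((Real.log ((v - c)/(u - c)) : ℝ) : ℂ) := by
  have h1 : ∫ ξ in u..v, ((ξ:ℂ) - ((c:ℝ):ℂ))⁻¹ = ∫ ξ in u..v, (((ξ - c)⁻¹ : ℝ) : ℂ) := by
    apply intervalIntegral.integral_congr
    intro x hx
    push_cast
    ring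
  rw [h1, intervalIntegral.integral_ofReal]
  norm_cast
  have h2 : ∫ ξ in u..v, (ξ - c)⁻¹ = ∫ ξ in (u-c)..(v-c), ξ⁻¹ :=
    intervalIntegral.integral_comp_sub_right (fun ξ => ξ⁻¹) c
  rw [h2, integral_inv h]

lemma sym_cancel {c r ε : ℝ} (hε : 0 < ε) (hr : ε ≤ r) :
    (∫ ξ in (c - r)..(c - ε), ((ξ:ℂ) - ((c:ℝ):ℂ))⁻¹)
      + (∫ ξ in (c + ε)..(c + r), ((ξ:ℂ) - ((c:ℝ):ℂ))⁻¹) = 0 := by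
  have h1 : (0:ℝ) ∉ Set.uIcc (c - r - c) (c - ε - c) := by
    rw [Set.uIcc_of_le (by linarith)]
    intro h
    simp only [Set.mem_Icc] at h
    linarith [h.2]
  have h2 : (0:ℝ) ∉ Set.uIcc (c + ε - c) (c + r - c) := by
    rw [Set.uIcc_of_le (by linarith)]
    intro h
    simp only [Set.mem_Icc] at h
    linarith [h.1]
  rw [cinv h1, cinv h2]
  have e1 : (c - ε - c)/(c - r - c) = (ε/r) := by
    rw [show c - ε - c = -ε by ring, show c - r - c = -r by ring, neg_div_neg_eq]
  have e2 : (c + r - c)/(c + ε - c) = (r/ε) := by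
    rw [show c + r - c = r by ring, show c + ε - c = ε by ring]
  rw [e1, e2]
  norm_cast
  rw [show (ε/r) = (r/ε)⁻¹ by rw [inv_div], Real.log_inv]
  ring

noncomputable def ft (a T : ℝ) (ξ : ℝ) : ℂ := (gg T ξ - gg T (2*a)) / ((ξ:ℂ) - ((2*a:ℝ):ℂ))

lemma ft_norm_le {a T : ℝ} (ha : 1 < a) (hT : 0 < T) {ξ : ℝ} (hξ : 1 ≤ ξ) :
    ‖ft a T ξ‖ ≤ T := by
  unfold ft
  by_cases h : ξ = 2*a
  · simp [h]
    positivity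
  · have hd : ((ξ:ℂ) - ((2*a:ℝ):ℂ)) = ((ξ - 2*a : ℝ):ℂ) := by push_cast; ring
    have hdne : ξ - 2*a ≠ 0 := sub_ne_zero.mpr h
    rw [norm_div, hd, Complex.norm_real, Real.norm_eq_abs]
    rw [div_le_iff₀ (abs_pos.mpr hdne)]
    exact gg_lip hT.le hξ (by linarith)

lemma measurable_gg (T : ℝ) : Measurable (gg T) := by
  unfold gg
  fun_prop

lemma ft_integrableOn {a T : ℝ} (ha : 1 < a) (hT : 0 < T) :
    IntegrableOn (ft a T) (Set.Icc a (3*a)) := by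
  apply MeasureTheory.Measure.integrableOn_of_bounded (M := T)
  · rw [Real.volume_Icc]; exact ENNReal.ofReal_ne_top
  · apply Measurable.aestronglyMeasurable
    unfold ft
    apply Measurable.div
    · exact (measurable_gg T).sub measurable_const
    · fun_prop
  · filter_upwards [MeasureTheory.ae_restrict_mem measurableSet_Icc] with ξ hξ
    exact ft_norm_le ha hT (by linarith [hξ.1])

lemma dcont {a u v : ℝ} (huv : ∀ ξ ∈ Set.Icc u v, ξ ≠ 2*a) :
    ContinuousOn (fun ξ : ℝ => ((ξ:ℂ) - ((2*a:ℝ):ℂ))⁻¹) (Set.Icc u v) := by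
  apply ContinuousOn.inv₀
  · exact (Complex.continuous_ofReal.comp continuous_id).continuousOn.sub continuousOn_const
  · intro ξ hξ
    intro h
    apply huv ξ hξ
    have : ((ξ - 2*a : ℝ) : ℂ) = 0 := by push_cast; push_cast at h; linear_combination h
    have := Complex.ofReal_eq_zero.mp this
    linarith [sub_eq_zero.mp (by linarith [this] : ξ - 2*a = 0)]

lemma tendsto_main {a T : ℝ} (ha : 1 < a) (hT : 0 < T) :
    Tendsto (fun ε : ℝ => ∫ ξ in {ξ : ℝ | a < ξ ∧ ξ < 3*a ∧ ε < |ξ - 2*a|},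
        gg T ξ / ((ξ:ℂ) - ((2*a:ℝ):ℂ)))
      (nhdsWithin 0 (Set.Ioi (0:ℝ))) (nhds (∫ ξ in Set.Ioo a (3*a), ft a T ξ)) := by
  set L := ∫ ξ in Set.Ioo a (3*a), ft a T ξ with hL
  set S : ℝ → Set ℝ := fun ε => {ξ : ℝ | a < ξ ∧ ξ < 3*a ∧ ε < |ξ - 2*a|} with hS
  have hft : IntegrableOn (ft a T) (Set.Ioo a (3*a)) :=
    (ft_integrableOn ha hT).mono_set Set.Ioo_subset_Icc_self
  have hSsub : ∀ ε, S ε ⊆ Set.Ioo a (3*a) := by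
    intro ε ξ hξ; exact ⟨hξ.1, hξ.2.1⟩
  have hSeq : ∀ ε ∈ Set.Ioo (0:ℝ) (a/2),
      S ε = Set.Ioo a (2*a - ε) ∪ Set.Ioo (2*a + ε) (3*a) := by
    rintro ε ⟨hε0, hεa⟩
    ext ξ
    simp only [hS, Set.mem_setOf_eq, Set.mem_union, Set.mem_Ioo]
    constructor
    · rintro ⟨h1, h2, h3⟩
      rcases lt_abs.mp h3 with h | h
      · right; exact ⟨by linarith, h2⟩
      · left; exact ⟨h1, by linarith⟩
    · rintro (⟨h1, h2⟩ | ⟨h1, h2⟩)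
      · exact ⟨h1, by linarith, lt_abs.mpr (Or.inr (by linarith))⟩
      · exact ⟨by linarith, h2, lt_abs.mpr (Or.inl (by linarith))⟩
  have hSmeas : ∀ ε ∈ Set.Ioo (0:ℝ) (a/2), MeasurableSet (S ε) := by
    intro ε hε; rw [hSeq ε hε]; exact (measurableSet_Ioo.union measurableSet_Ioo)
  -- eventual equality of integrals
  have hIoo : Set.Ioo (0:ℝ) (a/2) ∈ nhdsWithin 0 (Set.Ioi (0:ℝ)) :=
    Ioo_mem_nhdsGT_of_mem ⟨le_refl 0, by linarith⟩
  have hkey : ∀ ε ∈ Set.Ioo (0:ℝ) (a/2),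
      ∫ ξ in S ε, gg T ξ / ((ξ:ℂ) - ((2*a:ℝ):ℂ)) = ∫ ξ in S ε, ft a T ξ := by
    rintro ε hεm
    obtain ⟨hε0, hεa⟩ := hεm
    set d : ℝ → ℂ := fun ξ => ((ξ:ℂ) - ((2*a:ℝ):ℂ))⁻¹ with hd
    -- integrability pieces
    have hsub1 : Set.Ioo a (2*a - ε) ⊆ Set.Icc a (2*a - ε) := Set.Ioo_subset_Icc_self
    have hne1 : ∀ ξ ∈ Set.Icc a (2*a - ε), ξ ≠ 2*a := by
      rintro ξ ⟨_, h2⟩ h; rw [h] at h2; linarith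
    have hne2 : ∀ ξ ∈ Set.Icc (2*a + ε) (3*a), ξ ≠ 2*a := by
      rintro ξ ⟨h1, _⟩ h; rw [h] at h1; linarith
    have hd1 : IntegrableOn d (Set.Ioo a (2*a - ε)) :=
      ((dcont hne1).integrableOn_Icc).mono_set hsub1
    have hd2 : IntegrableOn d (Set.Ioo (2*a + ε) (3*a)) :=
      ((dcont hne2).integrableOn_Icc).mono_set Set.Ioo_subset_Icc_self
    have hft1 : IntegrableOn (ft a T) (Set.Ioo a (2*a - ε)) :=
      hft.mono_set (Set.Ioo_subset_Ioo (le_refl _) (by linarith))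
    have hft2 : IntegrableOn (ft a T) (Set.Ioo (2*a + ε) (3*a)) :=
      hft.mono_set (Set.Ioo_subset_Ioo (by linarith) (le_refl _))
    -- pointwise decomposition on each piece
    have hptw : ∀ ξ : ℝ, ξ ≠ 2*a →
        gg T ξ / ((ξ:ℂ) - ((2*a:ℝ):ℂ)) = ft a T ξ + gg T (2*a) • d ξ := by
      intro ξ hξ
      have hdne : ((ξ:ℂ) - ((2*a:ℝ):ℂ)) ≠ 0 := by
        intro h
        apply hξ
        have : ((ξ - 2*a : ℝ) : ℂ) = 0 := by push_cast; push_cast at h; linear_combination h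
        have := Complex.ofReal_eq_zero.mp this
        linarith
      rw [hd]
      simp only [smul_eq_mul]
      rw [ft]
      field_simp
      ring
    have hpc1 : ∀ ξ ∈ Set.Ioo a (2*a - ε), ξ ≠ 2*a := fun ξ hξ => hne1 ξ (hsub1 hξ)
    have hpc2 : ∀ ξ ∈ Set.Ioo (2*a + ε) (3*a), ξ ≠ 2*a :=
      fun ξ hξ => hne2 ξ (Set.Ioo_subset_Icc_self hξ)
    have hdisj : Disjoint (Set.Ioo a (2*a - ε)) (Set.Ioo (2*a + ε) (3*a)) := by
      rw [Set.disjoint_left]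
      rintro ξ ⟨_, h2⟩ ⟨h3, _⟩
      linarith
    have hpiece : ∀ (s : Set ℝ), MeasurableSet s → (∀ ξ ∈ s, ξ ≠ 2*a) →
        IntegrableOn (ft a T) s → IntegrableOn d s →
        ∫ ξ in s, gg T ξ / ((ξ:ℂ) - ((2*a:ℝ):ℂ))
          = (∫ ξ in s, ft a T ξ) + gg T (2*a) • ∫ ξ in s, d ξ := by
      intro s hms hs hfts hds
      have hds' : IntegrableOn (fun ξ => gg T (2*a) • d ξ) s volume := hds.smul (gg T (2*a))
      rw [MeasureTheory.setIntegral_congr_fun hms (fun ξ hξ => hptw ξ (hs ξ hξ)),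
        MeasureTheory.integral_add hfts hds', integral_smul]
    have hgd1 : IntegrableOn (fun ξ => gg T ξ / ((ξ:ℂ) - ((2*a:ℝ):ℂ))) (Set.Ioo a (2*a-ε)) := by
      apply IntegrableOn.congr_fun (hft1.add (hd1.smul (gg T (2*a)))) _ measurableSet_Ioo
      intro ξ hξ
      exact (hptw ξ (hpc1 ξ hξ)).symm
    have hgd2 : IntegrableOn (fun ξ => gg T ξ / ((ξ:ℂ) - ((2*a:ℝ):ℂ))) (Set.Ioo (2*a+ε) (3*a)) := by
      apply IntegrableOn.congr_fun (hft2.add (hd2.smul (gg T (2*a)))) _ measurableSet_Ioo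
      intro ξ hξ
      exact (hptw ξ (hpc2 ξ hξ)).symm
    rw [hSeq ε ⟨hε0, hεa⟩]
    rw [MeasureTheory.setIntegral_union hdisj measurableSet_Ioo hgd1 hgd2,
      MeasureTheory.setIntegral_union hdisj measurableSet_Ioo hft1 hft2,
      hpiece _ measurableSet_Ioo hpc1 hft1 hd1,
      hpiece _ measurableSet_Ioo hpc2 hft2 hd2]
    -- now the d-integrals cancel
    have hdint : (∫ ξ in Set.Ioo a (2*a-ε), d ξ) + (∫ ξ in Set.Ioo (2*a+ε) (3*a), d ξ) = 0 := by
      have e1 : (∫ ξ in Set.Ioo a (2*a-ε), d ξ) = ∫ ξ in a..(2*a-ε), d ξ := by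
        rw [intervalIntegral.integral_of_le (by linarith), integral_Ioc_eq_integral_Ioo]
      have e2 : (∫ ξ in Set.Ioo (2*a+ε) (3*a), d ξ) = ∫ ξ in (2*a+ε)..(3*a), d ξ := by
        rw [intervalIntegral.integral_of_le (by linarith), integral_Ioc_eq_integral_Ioo]
      rw [e1, e2]
      have := sym_cancel (c := 2*a) (r := a) (ε := ε) hε0 (by linarith)
      rw [show 2*a - a = a by ring, show 2*a + a = 3*a by ring] at this
      exact this
    have : gg T (2*a) • (∫ ξ in Set.Ioo a (2*a-ε), d ξ)
        + gg T (2*a) • (∫ ξ in Set.Ioo (2*a+ε) (3*a), d ξ) = 0 := by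
      rw [← smul_add, hdint, smul_zero]
    linear_combination this
  -- the limit statement
  have hbound : ∀ ε ∈ Set.Ioo (0:ℝ) (a/2), ‖(∫ ξ in S ε, ft a T ξ) - L‖ ≤ 2*T*ε := by
    intro ε hεm
    obtain ⟨hε0, hεa⟩ := hεm
    have hSm := hSmeas ε ⟨hε0, hεa⟩
    have hdiffeq := MeasureTheory.integral_diff (f := ft a T) (μ := volume) hSm hft (hSsub ε)
    have hdsub : Set.Ioo a (3*a) \ S ε ⊆ Set.Icc (2*a - ε) (2*a + ε) := by
      rintro ξ ⟨hξ1, hξ2⟩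
      simp only [hS, Set.mem_setOf_eq, not_and, not_lt] at hξ2
      have h3 := hξ2 hξ1.1 hξ1.2
      constructor
      · linarith [abs_le.mp h3 |>.1, abs_le.mp h3 |>.2]
      · linarith [abs_le.mp h3 |>.2]
    have hμ : volume (Set.Ioo a (3*a) \ S ε) ≤ ENNReal.ofReal (2*ε) := by
      refine le_trans (measure_mono hdsub) ?_
      rw [Real.volume_Icc]
      apply ENNReal.ofReal_le_ofReal
      linarith
    have hμtop : volume (Set.Ioo a (3*a) \ S ε) < ⊤ :=
      lt_of_le_of_lt hμ ENNReal.ofReal_lt_top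
    have hnm : ‖∫ ξ in Set.Ioo a (3*a) \ S ε, ft a T ξ‖
        ≤ T * (volume (Set.Ioo a (3*a) \ S ε)).toReal := by
      apply MeasureTheory.norm_setIntegral_le_of_norm_le_const hμtop
      · intro ξ hξ
        exact ft_norm_le ha hT (by linarith [hξ.1.1])
    have htr : (volume (Set.Ioo a (3*a) \ S ε)).toReal ≤ 2*ε := by
      calc (volume (Set.Ioo a (3*a) \ S ε)).toReal
          ≤ (ENNReal.ofReal (2*ε)).toReal := ENNReal.toReal_mono ENNReal.ofReal_ne_top hμ
        _ = 2*ε := ENNReal.toReal_ofReal (by linarith)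
    calc ‖(∫ ξ in S ε, ft a T ξ) - L‖ = ‖∫ ξ in Set.Ioo a (3*a) \ S ε, ft a T ξ‖ := by
          rw [hdiffeq, norm_sub_rev]
      _ ≤ T * (volume (Set.Ioo a (3*a) \ S ε)).toReal := hnm
      _ ≤ 2*T*ε := by nlinarith [(volume (Set.Ioo a (3*a) \ S ε)).toReal]
  have hmain : Tendsto (fun ε => ∫ ξ in S ε, ft a T ξ) (nhdsWithin 0 (Set.Ioi (0:ℝ))) (nhds L) := by
    rw [tendsto_iff_norm_sub_tendsto_zero]
    apply squeeze_zero' (Filter.Eventually.of_forall (fun _ => norm_nonneg _))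
    · filter_upwards [hIoo] with ε hε
      exact hbound ε hε
    · have h1 : Tendsto (fun ε : ℝ => 2*T*ε) (nhds 0) (nhds (2*T*0)) :=
        (continuous_const.mul continuous_id).tendsto 0
      rw [mul_zero] at h1
      exact h1.mono_left nhdsWithin_le_nhds
  apply hmain.congr'
  filter_upwards [hIoo] with ε hε
  exact (hkey ε hε).symm

lemma ft_norm_far {a T : ℝ} (ha : 1 < a) {ξ : ℝ} (hfar : a/2 ≤ |ξ - 2*a|) :
    ‖ft a T ξ‖ ≤ 4/a := by
  unfold ft
  have hdne : ξ - 2*a ≠ 0 := by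
    intro h; rw [h] at hfar; simp at hfar; linarith
  have hd : ((ξ:ℂ) - ((2*a:ℝ):ℂ)) = ((ξ - 2*a : ℝ):ℂ) := by push_cast; ring
  rw [norm_div, hd, Complex.norm_real, Real.norm_eq_abs]
  have hnum : ‖gg T ξ - gg T (2*a)‖ ≤ 2 := by
    calc ‖gg T ξ - gg T (2*a)‖ ≤ ‖gg T ξ‖ + ‖gg T (2*a)‖ := norm_sub_le _ _
      _ = 2 := by rw [norm_gg, norm_gg]; norm_num
  rw [div_le_div_iff₀ (abs_pos.mpr hdne) (by linarith)]
  nlinarith [abs_nonneg (ξ - 2*a)]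

lemma bound_main {a T : ℝ} (ha : 1 < a) (hT : 0 < T) :
    ‖∫ ξ in Set.Ioo a (3*a), ft a T ξ‖ ≤ 100 := by
  have h3a : a ≤ 3*a := by linarith
  have hLe : (∫ ξ in Set.Ioo a (3*a), ft a T ξ) = ∫ ξ in a..(3*a), ft a T ξ := by
    rw [intervalIntegral.integral_of_le h3a, integral_Ioc_eq_integral_Ioo]
  rw [hLe]
  have hii : ∀ u v : ℝ, a ≤ u → u ≤ v → v ≤ 3*a → IntervalIntegrable (ft a T) volume u v := by
    intro u v hu huv hv
    apply IntegrableOn.intervalIntegrable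
    rw [Set.uIcc_of_le huv]
    exact (ft_integrableOn ha hT).mono_set (Set.Icc_subset_Icc hu hv)
  -- piece bounds P1, P5 (far from singularity)
  have hP1 : ‖∫ ξ in a..(3*a/2), ft a T ξ‖ ≤ 2 := by
    have := intervalIntegral.norm_integral_le_of_norm_le_const (C := 4/a)
      (f := ft a T) (a := a) (b := 3*a/2) ?_
    · calc ‖∫ ξ in a..(3*a/2), ft a T ξ‖ ≤ 4/a * |3*a/2 - a| := this
        _ = 2 := by rw [show (3*a/2 - a) = a/2 by ring, abs_of_pos (by linarith)]; field_simp; norm_num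
    · intro ξ hξ
      rw [Set.uIoc_of_le (by linarith)] at hξ
      apply ft_norm_far ha
      rw [abs_of_nonpos (by linarith [hξ.2] : ξ - 2*a ≤ 0)]
      linarith [hξ.2]
  have hP5 : ‖∫ ξ in (5*a/2)..(3*a), ft a T ξ‖ ≤ 2 := by
    have := intervalIntegral.norm_integral_le_of_norm_le_const (C := 4/a)
      (f := ft a T) (a := 5*a/2) (b := 3*a) ?_
    · calc ‖∫ ξ in (5*a/2)..(3*a), ft a T ξ‖ ≤ 4/a * |3*a - 5*a/2| := this
        _ = 2 := by rw [show (3*a - 5*a/2) = a/2 by ring, abs_of_pos (by linarith)]; field_simp; norm_num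
    · intro ξ hξ
      rw [Set.uIoc_of_le (by linarith)] at hξ
      apply ft_norm_far ha
      rw [abs_of_nonneg (by linarith [hξ.1] : 0 ≤ ξ - 2*a)]
      linarith [hξ.1]
  -- bound with Lipschitz: any subinterval of middle
  have hmid : ∀ u v : ℝ, a ≤ u → u ≤ v → v ≤ 3*a →
      ‖∫ ξ in u..v, ft a T ξ‖ ≤ T * (v - u) := by
    intro u v hu huv hv
    have := intervalIntegral.norm_integral_le_of_norm_le_const (C := T)
      (f := ft a T) (a := u) (b := v) ?_
    · calc ‖∫ ξ in u..v, ft a T ξ‖ ≤ T * |v - u| := this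
        _ = T * (v - u) := by rw [abs_of_nonneg (by linarith)]
    · intro ξ hξ
      rw [Set.uIoc_of_le huv] at hξ
      exact ft_norm_le ha hT (by linarith [hξ.1])
  rcases le_or_gt (T * a) 2 with hTa | hTa
  · -- small T*a : three pieces
    have hs1 := intervalIntegral.integral_add_adjacent_intervals
      (hii a (3*a/2) (le_refl _) (by linarith) (by linarith))
      (hii (3*a/2) (5*a/2) (by linarith) (by linarith) (by linarith))
    have hs2 := intervalIntegral.integral_add_adjacent_intervals
      (hii a (5*a/2) (le_refl _) (by linarith) (by linarith))
      (hii (5*a/2) (3*a) (by linarith) (by linarith) (le_refl _))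
    have hM := hmid (3*a/2) (5*a/2) (by linarith) (by linarith) (by linarith)
    have : T * (5*a/2 - 3*a/2) ≤ 2 := by
      rw [show (5*a/2 - 3*a/2) = a by ring]
      linarith
    rw [← hs2, ← hs1]
    set Q1 := ∫ ξ in a..(3*a/2), ft a T ξ
    set Q2 := ∫ ξ in (3*a/2)..(5*a/2), ft a T ξ
    set Q3 := ∫ ξ in (5*a/2)..(3*a), ft a T ξ
    calc ‖Q1 + Q2 + Q3‖ ≤ ‖Q1‖ + ‖Q2‖ + ‖Q3‖ := norm_add₃_le
      _ ≤ 100 := by linarith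
  · -- large T*a : five pieces with oscillatory estimates
    set δ : ℝ := 1/T with hδdef
    have hδ0 : 0 < δ := by positivity
    have hδa : δ < a/2 := by
      rw [hδdef, div_lt_div_iff₀ hT (by norm_num)]
      linarith
    have hTδ : T * δ = 1 := by rw [hδdef]; field_simp
    -- ordering
    have ho1 : a ≤ 3*a/2 := by linarith
    have ho2 : 3*a/2 ≤ 2*a - δ := by linarith
    have ho3 : 2*a - δ ≤ 2*a + δ := by linarith
    have ho4 : 2*a + δ ≤ 5*a/2 := by linarith
    have ho5 : 5*a/2 ≤ 3*a := by linarith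
    -- split into five pieces
    have hs1 := intervalIntegral.integral_add_adjacent_intervals
      (hii a (3*a/2) (le_refl _) ho1 (by linarith))
      (hii (3*a/2) (2*a-δ) (by linarith) ho2 (by linarith))
    have hs2 := intervalIntegral.integral_add_adjacent_intervals
      (hii a (2*a-δ) (le_refl _) (by linarith) (by linarith))
      (hii (2*a-δ) (2*a+δ) (by linarith) ho3 (by linarith))
    have hs3 := intervalIntegral.integral_add_adjacent_intervals
      (hii a (2*a+δ) (le_refl _) (by linarith) (by linarith))
      (hii (2*a+δ) (5*a/2) (by linarith) ho4 (by linarith))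
    have hs4 := intervalIntegral.integral_add_adjacent_intervals
      (hii a (5*a/2) (le_refl _) (by linarith) (by linarith))
      (hii (5*a/2) (3*a) (by linarith) ho5 (le_refl _))
    have hP3 : ‖∫ ξ in (2*a-δ)..(2*a+δ), ft a T ξ‖ ≤ 2 := by
      have := hmid (2*a-δ) (2*a+δ) (by linarith) ho3 (by linarith)
      calc ‖∫ ξ in (2*a-δ)..(2*a+δ), ft a T ξ‖ ≤ T * (2*a+δ - (2*a-δ)) := this
        _ = 2 := by rw [show (2*a+δ - (2*a-δ)) = 2*δ by ring]; nlinarith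
    -- decompose P2 and P4
    have hdecomp : ∀ u v : ℝ, 3*a/2 ≤ u → u ≤ v → v ≤ 5*a/2 → (∀ ξ ∈ Set.Icc u v, ξ ≠ 2*a) →
        (∫ ξ in u..v, ft a T ξ)
          = (∫ ξ in u..v, gg T ξ / ((ξ:ℂ) - ((2*a:ℝ):ℂ)))
            - gg T (2*a) • ∫ ξ in u..v, ((ξ:ℂ) - ((2*a:ℝ):ℂ))⁻¹ := by
      intro u v hu huv hv hne
      have hcon : ∀ ξ ∈ Set.uIcc u v, ft a T ξ
          = gg T ξ / ((ξ:ℂ) - ((2*a:ℝ):ℂ)) - gg T (2*a) • ((ξ:ℂ) - ((2*a:ℝ):ℂ))⁻¹ := by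
        intro ξ hξ
        rw [Set.uIcc_of_le huv] at hξ
        have hdne : ((ξ:ℂ) - ((2*a:ℝ):ℂ)) ≠ 0 := by
          intro h
          apply hne ξ hξ
          have : ((ξ - 2*a : ℝ) : ℂ) = 0 := by push_cast; push_cast at h; linear_combination h
          have := Complex.ofReal_eq_zero.mp this
          linarith
        rw [ft]
        simp only [smul_eq_mul]
        field_simp
      have hne0 : ∀ ξ ∈ Set.Icc u v, ξ ≠ (0:ℝ) := by
        rintro ξ ⟨h1, _⟩ h; rw [h] at h1; linarith
      have hi1 : IntervalIntegrable (fun ξ => gg T ξ / ((ξ:ℂ) - ((2*a:ℝ):ℂ))) volume u v := by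
        apply ContinuousOn.intervalIntegrable
        rw [Set.uIcc_of_le huv]
        exact (continuousOn_gg T hne0).div ((Complex.continuous_ofReal.comp
          continuous_id).continuousOn.sub continuousOn_const)
          (fun ξ hξ => by
            intro h
            apply hne ξ hξ
            have : ((ξ - 2*a : ℝ) : ℂ) = 0 := by push_cast; push_cast at h; linear_combination h
            have := Complex.ofReal_eq_zero.mp this
            linarith)
      have hi2 : IntervalIntegrable (fun ξ => gg T (2*a) • ((ξ:ℂ) - ((2*a:ℝ):ℂ))⁻¹) volume u v := by
        apply ContinuousOn.intervalIntegrable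
        rw [Set.uIcc_of_le huv]
        exact (dcont hne).const_smul (gg T (2*a))
      rw [intervalIntegral.integral_congr hcon, intervalIntegral.integral_sub hi1 hi2,
        intervalIntegral.integral_smul]
    have hne24 : ∀ ξ ∈ Set.Icc (3*a/2) (2*a-δ), ξ ≠ 2*a := by
      rintro ξ ⟨_, h2⟩ h; rw [h] at h2; linarith
    have hne44 : ∀ ξ ∈ Set.Icc (2*a+δ) (5*a/2), ξ ≠ 2*a := by
      rintro ξ ⟨h1, _⟩ h; rw [h] at h1; linarith
    have hd2 := hdecomp (3*a/2) (2*a-δ) (le_refl _) ho2 (by linarith) hne24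
    have hd4 := hdecomp (2*a+δ) (5*a/2) (by linarith) ho4 (le_refl _) hne44
    -- the log terms cancel
    have hcancel : (∫ ξ in (3*a/2)..(2*a-δ), ((ξ:ℂ) - ((2*a:ℝ):ℂ))⁻¹)
        + (∫ ξ in (2*a+δ)..(5*a/2), ((ξ:ℂ) - ((2*a:ℝ):ℂ))⁻¹) = 0 := by
      have := sym_cancel (c := 2*a) (r := a/2) (ε := δ) hδ0 (by linarith)
      rw [show 2*a - a/2 = 3*a/2 by ring, show 2*a + a/2 = 5*a/2 by ring] at this
      exact this
    -- oscillatory bounds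
    have hO2 : ‖∫ ξ in (3*a/2)..(2*a-δ), gg T ξ / ((ξ:ℂ) - ((2*a:ℝ):ℂ))‖ ≤ 8 := by
      have := osc (a := a) (T := T) (m := δ) ha hT ho2
        (Set.Icc_subset_Icc (le_refl _) (by linarith)) hne24 hδ0
        (by rw [show 3*a/2 - 2*a = -(a/2) by ring, abs_neg, abs_of_pos (by linarith)]; linarith)
        (by rw [show 2*a - δ - 2*a = -δ by ring, abs_neg, abs_of_pos hδ0])
      calc ‖∫ ξ in (3*a/2)..(2*a-δ), gg T ξ / ((ξ:ℂ) - ((2*a:ℝ):ℂ))‖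
          ≤ 8 / (T*δ) := this
        _ = 8 := by rw [hTδ]; norm_num
    have hO4 : ‖∫ ξ in (2*a+δ)..(5*a/2), gg T ξ / ((ξ:ℂ) - ((2*a:ℝ):ℂ))‖ ≤ 8 := by
      have := osc (a := a) (T := T) (m := δ) ha hT ho4
        (Set.Icc_subset_Icc (by linarith) (le_refl _)) hne44 hδ0
        (by rw [show 2*a + δ - 2*a = δ by ring, abs_of_pos hδ0])
        (by rw [show 5*a/2 - 2*a = a/2 by ring, abs_of_pos (by linarith)]; linarith)
      calc ‖∫ ξ in (2*a+δ)..(5*a/2), gg T ξ / ((ξ:ℂ) - ((2*a:ℝ):ℂ))‖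
          ≤ 8 / (T*δ) := this
        _ = 8 := by rw [hTδ]; norm_num
    -- assemble: P2 + P4
    have hP24 : ‖(∫ ξ in (3*a/2)..(2*a-δ), ft a T ξ) + (∫ ξ in (2*a+δ)..(5*a/2), ft a T ξ)‖
        ≤ 16 := by
      rw [hd2, hd4]
      have heq : (∫ ξ in (3*a/2)..(2*a-δ), gg T ξ / ((ξ:ℂ) - ((2*a:ℝ):ℂ)))
          - gg T (2*a) • (∫ ξ in (3*a/2)..(2*a-δ), ((ξ:ℂ) - ((2*a:ℝ):ℂ))⁻¹)
          + ((∫ ξ in (2*a+δ)..(5*a/2), gg T ξ / ((ξ:ℂ) - ((2*a:ℝ):ℂ)))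
          - gg T (2*a) • (∫ ξ in (2*a+δ)..(5*a/2), ((ξ:ℂ) - ((2*a:ℝ):ℂ))⁻¹))
          = (∫ ξ in (3*a/2)..(2*a-δ), gg T ξ / ((ξ:ℂ) - ((2*a:ℝ):ℂ)))
          + (∫ ξ in (2*a+δ)..(5*a/2), gg T ξ / ((ξ:ℂ) - ((2*a:ℝ):ℂ))) := by
        have : gg T (2*a) • ((∫ ξ in (3*a/2)..(2*a-δ), ((ξ:ℂ) - ((2*a:ℝ):ℂ))⁻¹)
            + (∫ ξ in (2*a+δ)..(5*a/2), ((ξ:ℂ) - ((2*a:ℝ):ℂ))⁻¹)) = 0 := by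
          rw [hcancel, smul_zero]
        rw [smul_add] at this
        simp only [smul_eq_mul] at this ⊢
        linear_combination -this
      rw [heq]
      calc ‖(∫ ξ in (3*a/2)..(2*a-δ), gg T ξ / ((ξ:ℂ) - ((2*a:ℝ):ℂ)))
          + (∫ ξ in (2*a+δ)..(5*a/2), gg T ξ / ((ξ:ℂ) - ((2*a:ℝ):ℂ)))‖
          ≤ ‖∫ ξ in (3*a/2)..(2*a-δ), gg T ξ / ((ξ:ℂ) - ((2*a:ℝ):ℂ))‖
            + ‖∫ ξ in (2*a+δ)..(5*a/2), gg T ξ / ((ξ:ℂ) - ((2*a:ℝ):ℂ))‖ := norm_add_le _ _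
        _ ≤ 16 := by linarith
    -- final assembly
    have hLsplit : (∫ ξ in a..(3*a), ft a T ξ)
        = (∫ ξ in a..(3*a/2), ft a T ξ) + (∫ ξ in (3*a/2)..(2*a-δ), ft a T ξ)
          + (∫ ξ in (2*a-δ)..(2*a+δ), ft a T ξ) + (∫ ξ in (2*a+δ)..(5*a/2), ft a T ξ)
          + (∫ ξ in (5*a/2)..(3*a), ft a T ξ) := by
      rw [hs1, hs2, hs3, hs4]
    rw [hLsplit]
    set P1 := ∫ ξ in a..(3*a/2), ft a T ξ
    set P2 := ∫ ξ in (3*a/2)..(2*a-δ), ft a T ξ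
    set P3 := ∫ ξ in (2*a-δ)..(2*a+δ), ft a T ξ
    set P4 := ∫ ξ in (2*a+δ)..(5*a/2), ft a T ξ
    set P5 := ∫ ξ in (5*a/2)..(3*a), ft a T ξ
    have e : P1+P2+P3+P4+P5 = (P2+P4) + (P1+P3+P5) := by ring
    rw [e]
    calc ‖(P2+P4) + (P1+P3+P5)‖ ≤ ‖P2+P4‖ + ‖P1+P3+P5‖ := norm_add_le _ _
      _ ≤ ‖P2+P4‖ + (‖P1‖+‖P3‖+‖P5‖) := by
          have : ‖P1+P3+P5‖ ≤ ‖P1‖+‖P3‖+‖P5‖ := norm_add₃_le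
          linarith
      _ ≤ 100 := by linarith


/-- For all `a > 1` and `T > 0`, the principal-value integrals
`∫_a^{3a} exp(iT(ξ + ξ⁻¹))/(ξ - 2a) dξ` exist and are uniformly bounded. -/
theorem stmt3 : ∃ C : ℝ, ∀ a T : ℝ, 1 < a → 0 < T → ∃ L : ℂ,
    Tendsto (fun ε : ℝ =>
        ∫ ξ in {ξ : ℝ | a < ξ ∧ ξ < 3 * a ∧ ε < |ξ - 2 * a|},
          Complex.exp (Complex.I * (T : ℂ) * ((ξ : ℂ) + (ξ : ℂ)⁻¹)) / ((ξ : ℂ) - 2 * (a : ℂ)))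
      (nhdsWithin 0 (Set.Ioi (0 : ℝ))) (nhds L) ∧ ‖L‖ ≤ C := by
  refine ⟨100, fun a T ha hT => ?_⟩
  refine ⟨∫ ξ in Set.Ioo a (3*a), ft a T ξ, ?_, bound_main ha hT⟩
  have hpt : ∀ ξ : ℝ, Complex.exp (Complex.I * (T:ℂ) * ((ξ:ℂ) + (ξ:ℂ)⁻¹)) / ((ξ:ℂ) - 2*(a:ℂ))
      = gg T ξ / ((ξ:ℂ) - ((2*a:ℝ):ℂ)) := by
    intro ξ
    rw [gg]
    congr 1
    push_cast
    ring
  simp only [hpt]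
  exact tendsto_main ha hT
end

section
/- For all a > 0 and T > 0, the principal-value integrals ∫_a^{3a} exp(iT(ξ - ξ⁻¹))/(ξ - 2a) dξ are uniformly bounded in a and T. -/
set_option maxHeartbeats 1000000

open MeasureTheory Filter Set intervalIntegral

noncomputable section
namespace Stmt4


/-- The oscillating factor. -/
def E (T ξ : ℝ) : ℂ := Complex.exp (Complex.I * (T : ℂ) * ((ξ : ℂ) - (ξ : ℂ)⁻¹))

/-- Its real phase. -/
def φ (T ξ : ℝ) : ℝ := T * (ξ - ξ⁻¹)

lemma E_eq (T ξ : ℝ) : E T ξ = Complex.exp ((φ T ξ : ℂ) * Complex.I) := by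
  unfold E φ
  congr 1
  push_cast
  ring

lemma norm_E (T ξ : ℝ) : ‖E T ξ‖ = 1 := by
  rw [E_eq, Complex.norm_exp_ofReal_mul_I]

lemma norm_exp_I_sub (x y : ℝ) :
    ‖Complex.exp ((x : ℂ) * Complex.I) - Complex.exp ((y : ℂ) * Complex.I)‖ ≤ |x - y| := by
  have h : ∀ t : ℝ, t ∈ (Set.univ : Set ℝ) →
      HasDerivWithinAt (fun s : ℝ => Complex.exp ((s : ℂ) * Complex.I))
        (Complex.I * Complex.exp ((t : ℂ) * Complex.I)) Set.univ t := by
    intro t _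
    have h1 : HasDerivAt (fun z : ℂ => Complex.exp (z * Complex.I))
        (Complex.I * Complex.exp ((t : ℂ) * Complex.I)) (t : ℂ) := by
      have := ((hasDerivAt_id ((t : ℝ) : ℂ)).mul_const Complex.I).cexp
      simpa [mul_comm] using this
    exact (h1.comp_ofReal).hasDerivWithinAt
  have hb : ∀ t : ℝ, t ∈ (Set.univ : Set ℝ) →
      ‖Complex.I * Complex.exp ((t : ℂ) * Complex.I)‖ ≤ 1 := by
    intro t _
    rw [norm_mul, Complex.norm_I, one_mul, Complex.norm_exp_ofReal_mul_I]
  have := Convex.norm_image_sub_le_of_norm_hasDerivWithin_le h hb convex_univ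
    (Set.mem_univ y) (Set.mem_univ x)
  simpa [Real.norm_eq_abs] using this

lemma norm_E_sub_E (T x y : ℝ) : ‖E T x - E T y‖ ≤ |φ T x - φ T y| := by
  rw [E_eq, E_eq]
  exact norm_exp_I_sub _ _

lemma hasDerivAt_E (T : ℝ) {ξ : ℝ} (hξ : ξ ≠ 0) :
    HasDerivAt (E T) (Complex.I * T * (1 + ((ξ : ℂ) ^ 2)⁻¹) * E T ξ) ξ := by
  have hξc : (ξ : ℂ) ≠ 0 := Complex.ofReal_ne_zero.2 hξ
  have h1 : HasDerivAt (fun z : ℂ => z - z⁻¹) (1 + ((ξ : ℂ) ^ 2)⁻¹) (ξ : ℂ) := by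
    have := (hasDerivAt_id' (x := ((ξ : ℝ) : ℂ))).sub (hasDerivAt_inv hξc)
    exact this.congr_deriv (by ring)
  have h2 : HasDerivAt (fun z : ℂ => Complex.I * (T : ℂ) * (z - z⁻¹))
      (Complex.I * T * (1 + ((ξ : ℂ) ^ 2)⁻¹)) (ξ : ℂ) := by
    simpa [mul_comm, mul_assoc, mul_left_comm] using h1.const_mul (Complex.I * (T : ℂ))
  have h3 := h2.cexp
  have h4 := h3.comp_ofReal
  refine h4.congr_deriv ?_
  unfold E; ring

lemma continuousAt_E (T : ℝ) {ξ : ℝ} (hξ : ξ ≠ 0) : ContinuousAt (E T) ξ :=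
  (hasDerivAt_E T hξ).continuousAt





def lam (a T : ℝ) : ℝ := T + T / a ^ 2
def mm (a T : ℝ) : ℝ := T + T / (9 * a ^ 2)
def del (a T : ℝ) : ℝ := min a (lam a T)⁻¹

def f (a T : ℝ) (ξ : ℝ) : ℂ := E T ξ / ((ξ : ℂ) - 2 * (a : ℂ))
def g (a T : ℝ) (t : ℝ) : ℂ := (E T (2 * a + t) - E T (2 * a - t)) / (t : ℂ)

section basic
variable {a T : ℝ}

lemma lam_pos (ha : 0 < a) (hT : 0 < T) : 0 < lam a T := by unfold lam; positivity
lemma mm_pos (ha : 0 < a) (hT : 0 < T) : 0 < mm a T := by unfold mm; positivity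
lemma mm_le_lam (ha : 0 < a) (hT : 0 < T) : mm a T ≤ lam a T := by
  unfold mm lam
  have h1 : T / (9 * a ^ 2) ≤ T / a ^ 2 := by
    apply div_le_div_of_nonneg_left hT.le (by positivity); nlinarith
  linarith
lemma lam_le_9mm (ha : 0 < a) (hT : 0 < T) : lam a T ≤ 9 * mm a T := by
  unfold mm lam
  have : T / a ^ 2 = 9 * (T / (9 * a ^ 2)) := by
    field_simp
  nlinarith
lemma del_pos (ha : 0 < a) (hT : 0 < T) : 0 < del a T :=
  lt_min ha (inv_pos.2 (lam_pos ha hT))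
lemma del_le_a : del a T ≤ a := min_le_left _ _
lemma del_lam_le_one (ha : 0 < a) (hT : 0 < T) : del a T * lam a T ≤ 1 := by
  have h := lam_pos ha hT
  calc del a T * lam a T ≤ (lam a T)⁻¹ * lam a T :=
        mul_le_mul_of_nonneg_right (min_le_right _ _) h.le
    _ = 1 := inv_mul_cancel₀ h.ne'

lemma hp_bounds (ha : 0 < a) (hT : 0 < T) {ξ : ℝ} (h1 : a ≤ ξ) (h2 : ξ ≤ 3 * a) :
    mm a T ≤ T + T / ξ ^ 2 ∧ T + T / ξ ^ 2 ≤ lam a T := by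
  have hξ : 0 < ξ := lt_of_lt_of_le ha h1
  constructor
  · unfold mm
    have : T / (9 * a ^ 2) ≤ T / ξ ^ 2 := by
      apply div_le_div_of_nonneg_left hT.le (by positivity); nlinarith
    linarith
  · unfold lam
    have : T / ξ ^ 2 ≤ T / a ^ 2 := by
      apply div_le_div_of_nonneg_left hT.le (by positivity); nlinarith
    linarith

lemma norm_g_le (ha : 0 < a) (hT : 0 < T) {t : ℝ} (h1 : 0 < t) (h2 : t ≤ a) :
    ‖g a T t‖ ≤ 2 * lam a T := by
  have hA : (0:ℝ) < 2 * a + t := by linarith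
  have hB : (0:ℝ) < 2 * a - t := by linarith
  have hφ : φ T (2 * a + t) - φ T (2 * a - t)
      = 2 * t * T * (1 + ((2 * a + t) * (2 * a - t))⁻¹) := by
    unfold φ; field_simp; ring
  have hφb : |φ T (2 * a + t) - φ T (2 * a - t)| ≤ 2 * t * lam a T := by
    rw [hφ, abs_of_nonneg (by positivity)]
    unfold lam
    have hab : a ^ 2 ≤ (2 * a + t) * (2 * a - t) := by nlinarith
    have hinv : ((2 * a + t) * (2 * a - t))⁻¹ ≤ (a ^ 2)⁻¹ :=
      inv_anti₀ (by positivity) hab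
    have h3 : 2 * t * T * (1 + ((2 * a + t) * (2 * a - t))⁻¹)
        ≤ 2 * t * T * (1 + (a ^ 2)⁻¹) := by
      nlinarith [mul_le_mul_of_nonneg_left hinv (show (0:ℝ) ≤ 2 * t * T by positivity)]
    calc 2 * t * T * (1 + ((2 * a + t) * (2 * a - t))⁻¹)
        ≤ 2 * t * T * (1 + (a ^ 2)⁻¹) := h3
      _ = 2 * t * (T + T / a ^ 2) := by field_simp
  have hnorm : ‖g a T t‖ = ‖E T (2 * a + t) - E T (2 * a - t)‖ / t := by
    unfold g
    rw [norm_div, Complex.norm_real, Real.norm_eq_abs, abs_of_pos h1]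
  rw [hnorm, div_le_iff₀ h1]
  calc ‖E T (2 * a + t) - E T (2 * a - t)‖ ≤ |φ T (2 * a + t) - φ T (2 * a - t)| :=
        norm_E_sub_E T _ _
    _ ≤ 2 * t * lam a T := hφb
    _ = 2 * lam a T * t := by ring

lemma continuousOn_g (ha : 0 < a) (hT : 0 < T) :
    ContinuousOn (g a T) (Ioc 0 (del a T)) := by
  intro t ht
  obtain ⟨ht0, htd⟩ := ht
  have htd' : t ≤ a := le_trans htd del_le_a
  apply ContinuousAt.continuousWithinAt
  apply ContinuousAt.div
  · apply ContinuousAt.sub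
    · exact (continuousAt_E T (by linarith : (2*a+t) ≠ 0)).comp (by fun_prop)
    · exact (continuousAt_E T (by linarith : (2*a-t) ≠ 0)).comp (by fun_prop)
  · fun_prop
  · exact Complex.ofReal_ne_zero.2 (ne_of_gt ht0)

lemma g_intervalIntegrable (ha : 0 < a) (hT : 0 < T) :
    IntervalIntegrable (g a T) volume 0 (del a T) := by
  rw [intervalIntegrable_iff_integrableOn_Ioc_of_le (del_pos ha hT).le]
  apply Integrable.mono' (integrable_const (2 * lam a T))
  · exact ((continuousOn_g ha hT).aestronglyMeasurable measurableSet_Ioc)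
  · rw [ae_restrict_iff' measurableSet_Ioc]
    apply ae_of_all
    intro t ht
    exact norm_g_le ha hT ht.1 (le_trans ht.2 del_le_a)

lemma continuousOn_f {s : Set ℝ} (hs : ∀ ξ ∈ s, 0 < ξ ∧ ξ ≠ 2 * a) :
    ContinuousOn (f a T) s := by
  intro ξ hξ
  obtain ⟨h0, hne⟩ := hs ξ hξ
  apply ContinuousAt.continuousWithinAt
  apply ContinuousAt.div
  · exact continuousAt_E T h0.ne'
  · fun_prop
  · intro hcon
    apply hne
    have : ((ξ : ℂ)) = ((2 * a : ℝ) : ℂ) := by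
      push_cast; linear_combination hcon
    exact_mod_cast this

end basic

lemma continuousAt_f {a T : ℝ} {ξ : ℝ} (h0 : 0 < ξ) (hne : ξ ≠ 2 * a) :
    ContinuousAt (f a T) ξ := by
  apply ContinuousAt.div
  · exact continuousAt_E T h0.ne'
  · fun_prop
  · intro hcon
    apply hne
    have : ((ξ : ℂ)) = ((2 * a : ℝ) : ℂ) := by
      push_cast; linear_combination hcon
    exact_mod_cast this



def P (a T ξ : ℝ) : ℝ := (ξ - 2 * a) * (T + T / ξ ^ 2)
def Pd (a T ξ : ℝ) : ℝ := (T + T / ξ ^ 2) + (ξ - 2 * a) * (-2 * T / ξ ^ 3)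
def u (a T : ℝ) (ξ : ℝ) : ℂ := -Complex.I / ((P a T ξ : ℝ) : ℂ)
def ud (a T : ℝ) (ξ : ℝ) : ℂ := Complex.I * ((Pd a T ξ : ℝ) : ℂ) / ((P a T ξ : ℝ) : ℂ) ^ 2

lemma hasDerivAt_P (a T : ℝ) {ξ : ℝ} (hξ : ξ ≠ 0) : HasDerivAt (P a T) (Pd a T ξ) ξ := by
  have h2 := hasDerivAt_pow 2 ξ
  have h3 := (hasDerivAt_const ξ T).div h2 (pow_ne_zero 2 hξ)
  have h4 := (hasDerivAt_const ξ T).add h3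
  have h5 := ((hasDerivAt_id ξ).sub_const (2 * a)).mul h4
  refine h5.congr_deriv ?_
  simp only [Pi.add_apply, Pi.div_apply, id]
  unfold Pd
  field_simp
  ring

lemma continuousAt_P (a T : ℝ) {ξ : ℝ} (hξ : ξ ≠ 0) : ContinuousAt (P a T) ξ :=
  (hasDerivAt_P a T hξ).continuousAt

lemma continuousAt_Pd (a T : ℝ) {ξ : ℝ} (hξ : ξ ≠ 0) : ContinuousAt (Pd a T) ξ := by
  unfold Pd
  apply ContinuousAt.add
  · apply ContinuousAt.add continuousAt_const
    exact ContinuousAt.div continuousAt_const (by fun_prop) (pow_ne_zero 2 hξ)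
  · apply ContinuousAt.mul (by fun_prop)
    exact ContinuousAt.div continuousAt_const (by fun_prop) (pow_ne_zero 3 hξ)

lemma hasDerivAt_u (a T : ℝ) {ξ : ℝ} (hξ : ξ ≠ 0) (hP : P a T ξ ≠ 0) :
    HasDerivAt (u a T) (ud a T ξ) ξ := by
  have h1 : HasDerivAt (fun x : ℝ => ((P a T x : ℝ) : ℂ)) ((Pd a T ξ : ℝ) : ℂ) ξ :=
    (hasDerivAt_P a T hξ).ofReal_comp
  have hPc : ((P a T ξ : ℝ) : ℂ) ≠ 0 := Complex.ofReal_ne_zero.2 hP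
  have h2 := (hasDerivAt_const ξ (-Complex.I)).div h1 hPc
  refine h2.congr_deriv ?_
  unfold ud
  field_simp
  ring

lemma side_bound {a T : ℝ} (ha : 0 < a) (hT : 0 < T) (hd : (lam a T)⁻¹ ≤ a)
    (p q : ℝ) (hpq : p ≤ q) (hsub : Icc p q ⊆ Icc a (3 * a))
    (hdist : ∀ ξ ∈ Icc p q, del a T ≤ |ξ - 2 * a|) :
    ‖∫ ξ in p..q, f a T ξ‖ ≤ 504 := by
  have hδeq : del a T = (lam a T)⁻¹ := min_eq_right hd
  have hδpos := del_pos ha hT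
  have hmm := mm_pos ha hT
  have hlam := lam_pos ha hT
  have h9 := lam_le_9mm ha hT
  have huIcc : uIcc p q = Icc p q := uIcc_of_le hpq
  -- pointwise facts
  have hfacts : ∀ ξ ∈ Icc p q, 0 < ξ ∧ del a T * mm a T ≤ |P a T ξ| ∧ P a T ξ ≠ 0 ∧
      |Pd a T ξ| ≤ 3 * lam a T ∧ mm a T ≤ T + T / ξ ^ 2 := by
    intro ξ hξ
    obtain ⟨hξa, hξ3a⟩ := hsub hξ
    have hξ0 : 0 < ξ := lt_of_lt_of_le ha hξa
    have habs : |ξ - 2 * a| ≤ a := abs_le.2 ⟨by linarith, by linarith⟩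
    have hdξ := hdist ξ hξ
    obtain ⟨hm, hl⟩ := hp_bounds ha hT hξa hξ3a
    have hpos2 : 0 < T + T / ξ ^ 2 := lt_of_lt_of_le hmm hm
    have hPabs : |P a T ξ| = |ξ - 2 * a| * (T + T / ξ ^ 2) := by
      unfold P; rw [abs_mul, abs_of_pos hpos2]
    have hPlb : del a T * mm a T ≤ |P a T ξ| := by
      rw [hPabs]
      exact mul_le_mul hdξ hm hmm.le (abs_nonneg _)
    refine ⟨hξ0, hPlb, ?_, ?_, hm⟩
    · intro h0
      rw [h0, abs_zero] at hPlb
      nlinarith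
    · -- |Pd| ≤ 3 lam
      unfold Pd
      have h23 : |(-2) * T / ξ ^ 3| = 2 * T / ξ ^ 3 := by
        rw [abs_div, abs_of_pos (by positivity : (0:ℝ) < ξ ^ 3)]
        rw [abs_of_nonpos (by linarith : (-2) * T ≤ 0)]
        ring_nf
      have hb : |(ξ - 2 * a) * (-2 * T / ξ ^ 3)| ≤ a * (2 * T / a ^ 3) := by
        rw [abs_mul]
        apply mul_le_mul habs ?_ (abs_nonneg _) ha.le
        rw [h23]
        apply div_le_div_of_nonneg_left (by linarith) (by positivity)
        nlinarith [pow_le_pow_left₀ ha.le hξa 3]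
      have h2Ta : a * (2 * T / a ^ 3) = 2 * (T / a ^ 2) := by
        field_simp
      have hTa2 : T / a ^ 2 ≤ lam a T := by unfold lam; nlinarith [div_pos hT (by positivity : (0:ℝ) < a ^ 2)]
      calc |(T + T / ξ ^ 2) + (ξ - 2 * a) * (-2 * T / ξ ^ 3)|
          ≤ |T + T / ξ ^ 2| + |(ξ - 2 * a) * (-2 * T / ξ ^ 3)| := abs_add_le _ _
        _ ≤ lam a T + 2 * (T / a ^ 2) := by
            rw [abs_of_pos hpos2]
            rw [h2Ta] at hb
            linarith
        _ ≤ 3 * lam a T := by linarith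
  -- derivative hypotheses
  have hu : ∀ ξ ∈ uIcc p q, HasDerivAt (u a T) (ud a T ξ) ξ := by
    rw [huIcc]; intro ξ hξ
    obtain ⟨h0, _, hPne, _, _⟩ := hfacts ξ hξ
    exact hasDerivAt_u a T h0.ne' hPne
  have hv : ∀ ξ ∈ uIcc p q, HasDerivAt (E T)
      (Complex.I * T * (1 + ((ξ : ℂ) ^ 2)⁻¹) * E T ξ) ξ := by
    rw [huIcc]; intro ξ hξ
    exact hasDerivAt_E T (hfacts ξ hξ).1.ne'
  -- integrability
  have hu'int : IntervalIntegrable (ud a T) volume p q := by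
    apply ContinuousOn.intervalIntegrable
    rw [huIcc]; intro ξ hξ
    obtain ⟨h0, _, hPne, _, _⟩ := hfacts ξ hξ
    apply ContinuousAt.continuousWithinAt
    apply ContinuousAt.div
    · exact ContinuousAt.mul continuousAt_const
        ((Complex.continuous_ofReal.continuousAt).comp (continuousAt_Pd a T h0.ne'))
    · exact ContinuousAt.pow
        ((Complex.continuous_ofReal.continuousAt).comp (continuousAt_P a T h0.ne')) 2
    · exact pow_ne_zero 2 (Complex.ofReal_ne_zero.2 hPne)
  have hv'int : IntervalIntegrable (fun ξ : ℝ => Complex.I * T * (1 + ((ξ : ℂ) ^ 2)⁻¹) * E T ξ)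
      volume p q := by
    apply ContinuousOn.intervalIntegrable
    rw [huIcc]; intro ξ hξ
    have h0 := (hfacts ξ hξ).1
    apply ContinuousAt.continuousWithinAt
    apply ContinuousAt.mul
    · apply ContinuousAt.mul continuousAt_const
      apply ContinuousAt.add continuousAt_const
      apply ContinuousAt.inv₀ (by fun_prop)
      exact pow_ne_zero 2 (Complex.ofReal_ne_zero.2 h0.ne')
    · exact continuousAt_E T h0.ne'
  -- the integrand identity
  have heq : EqOn (fun ξ : ℝ => u a T ξ * (Complex.I * T * (1 + ((ξ : ℂ) ^ 2)⁻¹) * E T ξ))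
      (f a T) (uIcc p q) := by
    rw [huIcc]; intro ξ hξ
    obtain ⟨h0, _, hPne, _, _⟩ := hfacts ξ hξ
    have hξc : (ξ : ℂ) ≠ 0 := Complex.ofReal_ne_zero.2 h0.ne'
    have hPc : ((P a T ξ : ℝ) : ℂ) = ((ξ : ℂ) - 2 * a) * ((T : ℂ) + (T : ℂ) / (ξ : ℂ) ^ 2) := by
      unfold P; push_cast; ring
    have hsub' : ((ξ : ℂ) - 2 * a) ≠ 0 := by
      intro hcon
      apply hPne
      unfold P
      have : (ξ : ℝ) - 2 * a = 0 := by
        have : ((ξ - 2*a : ℝ) : ℂ) = 0 := by push_cast; linear_combination hcon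
        exact_mod_cast this
      rw [this, zero_mul]
    have hfac : ((T : ℂ) + (T : ℂ) / (ξ : ℂ) ^ 2) ≠ 0 := by
      have : ((T + T / ξ ^ 2 : ℝ) : ℂ) = (T : ℂ) + (T : ℂ) / (ξ : ℂ) ^ 2 := by push_cast; ring
      rw [← this]
      exact Complex.ofReal_ne_zero.2 (by nlinarith [(hfacts ξ hξ).2.2.2.2] : T + T / ξ ^ 2 ≠ 0)
    show u a T ξ * _ = _
    unfold u f
    rw [hPc, div_mul_eq_mul_div]
    have h7 : -Complex.I * (Complex.I * (T : ℂ) * (1 + ((ξ : ℂ) ^ 2)⁻¹) * E T ξ)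
        = ((T : ℂ) + (T : ℂ) / (ξ : ℂ) ^ 2) * E T ξ := by
      have h8 : -Complex.I * Complex.I = 1 := by simp [Complex.I_mul_I]
      calc -Complex.I * (Complex.I * (T : ℂ) * (1 + ((ξ : ℂ) ^ 2)⁻¹) * E T ξ)
          = (-Complex.I * Complex.I) * ((T : ℂ) * (1 + ((ξ : ℂ) ^ 2)⁻¹) * E T ξ) := by ring
        _ = (T : ℂ) * (1 + ((ξ : ℂ) ^ 2)⁻¹) * E T ξ := by rw [h8, one_mul]
        _ = ((T : ℂ) + (T : ℂ) / (ξ : ℂ) ^ 2) * E T ξ := by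
            congr 1
            field_simp
    rw [h7, mul_comm ((ξ : ℂ) - 2 * (a : ℂ)) ((T : ℂ) + (T : ℂ) / (ξ : ℂ) ^ 2)]
    exact mul_div_mul_left _ _ hfac
  -- IBP
  have hIBP := intervalIntegral.integral_mul_deriv_eq_deriv_mul hu hv hu'int hv'int
  have hint : ∫ ξ in p..q, f a T ξ
      = u a T q * E T q - u a T p * E T p - ∫ ξ in p..q, ud a T ξ * E T ξ := by
    rw [← intervalIntegral.integral_congr heq]
    exact hIBP
  -- norms of boundary terms
  have hubnd : ∀ ξ ∈ Icc p q, ‖u a T ξ‖ ≤ 9 := by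
    intro ξ hξ
    obtain ⟨h0, hPlb, hPne, _, _⟩ := hfacts ξ hξ
    have : ‖u a T ξ‖ = 1 / |P a T ξ| := by
      unfold u
      rw [norm_div, norm_neg, Complex.norm_I, Complex.norm_real, Real.norm_eq_abs]
    rw [this]
    have hdm : 0 < del a T * mm a T := mul_pos hδpos hmm
    have h1 : 1 / |P a T ξ| ≤ 1 / (del a T * mm a T) :=
      one_div_le_one_div_of_le hdm hPlb
    have h2 : 1 / (del a T * mm a T) ≤ 9 := by
      rw [hδeq, div_le_iff₀ (by positivity)]
      calc (1:ℝ) = lam a T * (lam a T)⁻¹ := (mul_inv_cancel₀ hlam.ne').symm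
        _ ≤ (9 * mm a T) * (lam a T)⁻¹ := mul_le_mul_of_nonneg_right h9 (by positivity)
        _ = 9 * ((lam a T)⁻¹ * mm a T) := by ring
    linarith
  -- bound on  ∫ ud * E
  have hFTC : ∫ ξ in p..q, ((ξ - 2 * a) ^ 2)⁻¹ = (p - 2 * a)⁻¹ - (q - 2 * a)⁻¹ := by
    have hF : ∀ ξ ∈ uIcc p q, HasDerivAt (fun x : ℝ => -(x - 2 * a)⁻¹) (((ξ - 2 * a) ^ 2)⁻¹) ξ := by
      rw [huIcc]; intro ξ hξ
      have hne : ξ - 2 * a ≠ 0 := by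
        have := hdist ξ hξ
        intro h0; rw [h0, abs_zero] at this; linarith
      have h1 := (((hasDerivAt_id ξ).sub_const (2 * a)).inv hne).neg
      refine h1.congr_deriv ?_
      simp only [id]
      field_simp
    have hint2 : IntervalIntegrable (fun ξ : ℝ => ((ξ - 2 * a) ^ 2)⁻¹) volume p q := by
      apply ContinuousOn.intervalIntegrable
      rw [huIcc]; intro ξ hξ
      have hne : ξ - 2 * a ≠ 0 := by
        have := hdist ξ hξ
        intro h0; rw [h0, abs_zero] at this; linarith
      exact (ContinuousAt.inv₀ (((continuous_id.sub continuous_const).pow 2).continuousAt)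
        (pow_ne_zero 2 hne)).continuousWithinAt
    have := intervalIntegral.integral_eq_sub_of_hasDerivAt hF hint2
    rw [this]; ring
  have hGbound : ‖∫ ξ in p..q, ud a T ξ * E T ξ‖ ≤ 486 := by
    set c : ℝ := 3 * lam a T / (mm a T) ^ 2 with hc
    have hcpos : 0 < c := by positivity
    have hae : ∀ᵐ t ∂(volume.restrict (uIoc p q)), ‖ud a T t * E T t‖ ≤ c * ((t - 2 * a) ^ 2)⁻¹ := by
      rw [uIoc_of_le hpq, ae_restrict_iff' measurableSet_Ioc]
      apply ae_of_all
      intro ξ hξ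
      have hξ' : ξ ∈ Icc p q := Ioc_subset_Icc_self hξ
      obtain ⟨h0, hPlb, hPne, hPd, hmlb⟩ := hfacts ξ hξ'
      have hne : ξ - 2 * a ≠ 0 := by
        have := hdist ξ hξ'
        intro hz; rw [hz, abs_zero] at this; linarith
      have hnorm : ‖ud a T ξ * E T ξ‖ = |Pd a T ξ| / (P a T ξ) ^ 2 := by
        rw [norm_mul, norm_E, mul_one]
        unfold ud
        rw [norm_div, norm_mul, Complex.norm_I, one_mul, norm_pow,
          Complex.norm_real, Complex.norm_real, Real.norm_eq_abs, Real.norm_eq_abs, sq_abs]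
      rw [hnorm]
      have hden : mm a T ^ 2 * (ξ - 2 * a) ^ 2 ≤ P a T ξ ^ 2 := by
        have : P a T ξ ^ 2 = (ξ - 2 * a) ^ 2 * (T + T / ξ ^ 2) ^ 2 := by unfold P; ring
        rw [this]
        have h1 : mm a T ^ 2 ≤ (T + T / ξ ^ 2) ^ 2 := by nlinarith
        nlinarith [sq_nonneg (ξ - 2 * a)]
      have hdenpos : (0:ℝ) < mm a T ^ 2 * (ξ - 2 * a) ^ 2 := by positivity
      calc |Pd a T ξ| / P a T ξ ^ 2 ≤ (3 * lam a T) / (mm a T ^ 2 * (ξ - 2 * a) ^ 2) := by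
            apply div_le_div₀ (by positivity) hPd hdenpos hden
        _ = c * ((ξ - 2 * a) ^ 2)⁻¹ := by
            rw [hc]; field_simp
      done
    have hGint : IntervalIntegrable (fun t : ℝ => c * ((t - 2 * a) ^ 2)⁻¹) volume p q := by
      apply ContinuousOn.intervalIntegrable
      rw [huIcc]; intro ξ hξ
      have hne : ξ - 2 * a ≠ 0 := by
        have := hdist ξ hξ
        intro h0; rw [h0, abs_zero] at this; linarith
      exact (continuousAt_const.mul
        (ContinuousAt.inv₀ (((continuous_id.sub continuous_const).pow 2).continuousAt)
        (pow_ne_zero 2 hne))).continuousWithinAt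
    have h1 := intervalIntegral.norm_integral_le_abs_of_norm_le hae hGint
    have h2 : ∫ t in p..q, c * ((t - 2 * a) ^ 2)⁻¹ = c * ((p - 2 * a)⁻¹ - (q - 2 * a)⁻¹) := by
      rw [intervalIntegral.integral_const_mul, hFTC]
    have h3 : |∫ t in p..q, c * ((t - 2 * a) ^ 2)⁻¹| ≤ c * (2 * lam a T) := by
      rw [h2, abs_mul, abs_of_pos hcpos]
      apply mul_le_mul_of_nonneg_left ?_ hcpos.le
      have hp' : p ∈ Icc p q := ⟨le_refl p, hpq⟩
      have hq' : q ∈ Icc p q := ⟨hpq, le_refl q⟩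
      have hbp : |(p - 2 * a)⁻¹| ≤ lam a T := by
        rw [abs_inv]
        have h4 := hdist p hp'
        rw [hδeq] at h4
        calc |p - 2 * a|⁻¹ ≤ ((lam a T)⁻¹)⁻¹ :=
              inv_anti₀ (by positivity) h4
          _ = lam a T := inv_inv _
      have hbq : |(q - 2 * a)⁻¹| ≤ lam a T := by
        rw [abs_inv]
        have h4 := hdist q hq'
        rw [hδeq] at h4
        calc |q - 2 * a|⁻¹ ≤ ((lam a T)⁻¹)⁻¹ :=
              inv_anti₀ (by positivity) h4
          _ = lam a T := inv_inv _
      calc |(p - 2 * a)⁻¹ - (q - 2 * a)⁻¹| ≤ |(p - 2 * a)⁻¹| + |(q - 2 * a)⁻¹| := abs_sub _ _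
        _ ≤ 2 * lam a T := by linarith
    have h5 : c * (2 * lam a T) ≤ 486 := by
      rw [hc]
      rw [div_mul_eq_mul_div, div_le_iff₀ (by positivity)]
      nlinarith [sq_nonneg (lam a T), sq_nonneg (mm a T)]
    linarith
  -- assemble
  rw [hint]
  have hp' : p ∈ Icc p q := ⟨le_refl p, hpq⟩
  have hq' : q ∈ Icc p q := ⟨hpq, le_refl q⟩
  calc ‖u a T q * E T q - u a T p * E T p - ∫ ξ in p..q, ud a T ξ * E T ξ‖
      ≤ ‖u a T q * E T q - u a T p * E T p‖ + ‖∫ ξ in p..q, ud a T ξ * E T ξ‖ := norm_sub_le _ _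
    _ ≤ (‖u a T q * E T q‖ + ‖u a T p * E T p‖) + 486 := by
        have := norm_sub_le (u a T q * E T q) (u a T p * E T p)
        linarith [hGbound]
    _ ≤ (9 + 9) + 486 := by
        rw [norm_mul, norm_mul, norm_E, norm_E, mul_one, mul_one]
        linarith [hubnd p hp', hubnd q hq']
    _ = 504 := by norm_num



lemma continuousOn_f' {a T : ℝ} {s : Set ℝ} (hs : ∀ ξ ∈ s, 0 < ξ ∧ ξ ≠ 2 * a) :
    ContinuousOn (f a T) s := fun ξ hξ =>
  (continuousAt_f (hs ξ hξ).1 (hs ξ hξ).2).continuousWithinAt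


end Stmt4
end

open MeasureTheory Filter Set


open Stmt4 in
/-- For all `a > 0` and `T > 0`, the principal-value integrals
`∫_a^{3a} exp(iT(ξ - ξ⁻¹))/(ξ - 2a) dξ` exist and are uniformly bounded in `a` and `T`. -/
theorem stmt4 : ∃ C : ℝ, ∀ a T : ℝ, 0 < a → 0 < T → ∃ L : ℂ,
    Tendsto (fun ε : ℝ =>
        ∫ ξ in {ξ : ℝ | a < ξ ∧ ξ < 3 * a ∧ ε < |ξ - 2 * a|},
          Complex.exp (Complex.I * (T : ℂ) * ((ξ : ℂ) - (ξ : ℂ)⁻¹)) / ((ξ : ℂ) - 2 * (a : ℂ)))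
      (nhdsWithin 0 (Set.Ioi (0 : ℝ))) (nhds L) ∧ ‖L‖ ≤ C := by
  refine ⟨2000, fun a T ha hT => ?_⟩
  have hδpos := del_pos ha hT
  have hδa : del a T ≤ a := del_le_a
  have hlam := lam_pos ha hT
  set δ := del a T with hδdef
  set A := ∫ ξ in a..(2 * a - δ), f a T ξ with hA
  set B := ∫ ξ in (2 * a + δ)..(3 * a), f a T ξ with hB
  set N := ∫ t in (0:ℝ)..δ, g a T t with hN
  have hgI : IntervalIntegrable (g a T) volume 0 δ := g_intervalIntegrable ha hT
  refine ⟨A + B + N, ?_, ?_⟩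
  · -- the Tendsto
    have hfsame : (fun ε : ℝ =>
        ∫ ξ in {ξ : ℝ | a < ξ ∧ ξ < 3 * a ∧ ε < |ξ - 2 * a|},
          Complex.exp (Complex.I * (T : ℂ) * ((ξ : ℂ) - (ξ : ℂ)⁻¹)) / ((ξ : ℂ) - 2 * (a : ℂ)))
        = (fun ε : ℝ => ∫ ξ in {ξ : ℝ | a < ξ ∧ ξ < 3 * a ∧ ε < |ξ - 2 * a|}, f a T ξ) := rfl
    rw [hfsame]
    have key : ∀ ε ∈ Ioo (0:ℝ) δ,
        (∫ ξ in {ξ : ℝ | a < ξ ∧ ξ < 3 * a ∧ ε < |ξ - 2 * a|}, f a T ξ)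
          = A + B + (N - ∫ t in (0:ℝ)..ε, g a T t) := by
      rintro ε ⟨hε0, hεδ⟩
      have hεa : ε < a := lt_of_lt_of_le hεδ hδa
      have hset : {ξ : ℝ | a < ξ ∧ ξ < 3 * a ∧ ε < |ξ - 2 * a|}
          = Ioo a (2 * a - ε) ∪ Ioo (2 * a + ε) (3 * a) := by
        ext ξ
        simp only [mem_setOf_eq, mem_union, mem_Ioo]
        rw [lt_abs]
        constructor
        · rintro ⟨h1, h2, h3 | h4⟩
          · right; exact ⟨by linarith, h2⟩
          · left; exact ⟨h1, by linarith⟩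
        · rintro (⟨h1, h2⟩ | ⟨h1, h2⟩)
          · exact ⟨h1, by linarith, Or.inr (by linarith)⟩
          · exact ⟨by linarith, h2, Or.inl (by linarith)⟩
      rw [hset]
      have hcont1 : ContinuousOn (f a T) (Icc a (2 * a - ε)) :=
        continuousOn_f' (fun ξ hξ => ⟨by linarith [hξ.1], by intro h; rw [h] at hξ; linarith [hξ.2]⟩)
      have hcont2 : ContinuousOn (f a T) (Icc (2 * a + ε) (3 * a)) :=
        continuousOn_f' (fun ξ hξ => ⟨by linarith [hξ.1], by intro h; rw [h] at hξ; linarith [hξ.1]⟩)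
      have hint1 : IntegrableOn (f a T) (Ioo a (2 * a - ε)) volume :=
        (hcont1.integrableOn_Icc).mono_set Ioo_subset_Icc_self
      have hint2 : IntegrableOn (f a T) (Ioo (2 * a + ε) (3 * a)) volume :=
        (hcont2.integrableOn_Icc).mono_set Ioo_subset_Icc_self
      have hdisj : Disjoint (Ioo a (2 * a - ε)) (Ioo (2 * a + ε) (3 * a)) := by
        rw [Set.disjoint_left]
        rintro x ⟨_, h1⟩ ⟨h2, _⟩
        linarith
      rw [MeasureTheory.setIntegral_union hdisj measurableSet_Ioo hint1 hint2]
      have e1 : ∫ ξ in Ioo a (2 * a - ε), f a T ξ = ∫ ξ in a..(2 * a - ε), f a T ξ := by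
        rw [intervalIntegral.integral_of_le (by linarith), MeasureTheory.integral_Ioc_eq_integral_Ioo]
      have e2 : ∫ ξ in Ioo (2 * a + ε) (3 * a), f a T ξ = ∫ ξ in (2 * a + ε)..(3 * a), f a T ξ := by
        rw [intervalIntegral.integral_of_le (by linarith), MeasureTheory.integral_Ioc_eq_integral_Ioo]
      rw [e1, e2]
      -- interval integrability of f on subintervals
      have hii : ∀ p q : ℝ, a ≤ p → p ≤ q → q ≤ 2 * a - ε ∨ 2 * a + ε ≤ p → q ≤ 3 * a →
          IntervalIntegrable (f a T) volume p q := by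
        intro p q h1 h2 h3 h4
        apply ContinuousOn.intervalIntegrable
        rw [uIcc_of_le h2]
        apply continuousOn_f'
        intro ξ hξ
        rcases h3 with h3 | h3
        · exact ⟨by linarith [hξ.1], by intro h; rw [h] at hξ; linarith [hξ.2]⟩
        · exact ⟨by linarith [hξ.1], by intro h; rw [h] at hξ; linarith [hξ.1]⟩
      have s1 : ∫ ξ in a..(2 * a - ε), f a T ξ
          = A + ∫ ξ in (2 * a - δ)..(2 * a - ε), f a T ξ := by
        rw [hA]
        rw [intervalIntegral.integral_add_adjacent_intervals
          (hii a (2 * a - δ) le_rfl (by linarith) (Or.inl (by linarith)) (by linarith))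
          (hii (2 * a - δ) (2 * a - ε) (by linarith) (by linarith) (Or.inl (by linarith)) (by linarith))]
      have s2 : ∫ ξ in (2 * a + ε)..(3 * a), f a T ξ
          = (∫ ξ in (2 * a + ε)..(2 * a + δ), f a T ξ) + B := by
        rw [hB]
        rw [intervalIntegral.integral_add_adjacent_intervals
          (hii (2 * a + ε) (2 * a + δ) (by linarith) (by linarith) (Or.inr le_rfl) (by linarith))
          (hii (2 * a + δ) (3 * a) (by linarith) (by linarith) (Or.inr (by linarith)) (by linarith))]
      rw [s1, s2]
      have e3 : ∫ ξ in (2 * a - δ)..(2 * a - ε), f a T ξ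
          = ∫ t in ε..δ, f a T (2 * a - t) := by
        rw [intervalIntegral.integral_comp_sub_left (f a T) (2 * a)]
      have e4 : ∫ ξ in (2 * a + ε)..(2 * a + δ), f a T ξ
          = ∫ t in ε..δ, f a T (2 * a + t) := by
        rw [intervalIntegral.integral_comp_add_left (f a T) (2 * a)]
      have i1 : IntervalIntegrable (fun t => f a T (2 * a + t)) volume ε δ := by
        apply ContinuousOn.intervalIntegrable
        rw [uIcc_of_le hεδ.le]
        intro t ht
        exact ((continuousAt_f (by linarith [ht.1] : (0:ℝ) < 2 * a + t)
          (by intro h; linarith [ht.1, hεδ])).comp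
          ((continuous_const.add continuous_id).continuousAt)).continuousWithinAt
      have i2 : IntervalIntegrable (fun t => f a T (2 * a - t)) volume ε δ := by
        apply ContinuousOn.intervalIntegrable
        rw [uIcc_of_le hεδ.le]
        intro t ht
        have htδ : t ≤ δ := ht.2
        exact ((continuousAt_f (by linarith [ht.1] : (0:ℝ) < 2 * a - t)
          (by intro h; linarith [ht.1])).comp
          ((continuous_const.sub continuous_id).continuousAt)).continuousWithinAt
      have e5 : (∫ t in ε..δ, f a T (2 * a + t)) + (∫ t in ε..δ, f a T (2 * a - t))
          = ∫ t in ε..δ, g a T t := by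
        rw [← intervalIntegral.integral_add i1 i2]
        apply intervalIntegral.integral_congr
        intro t ht
        rw [uIcc_of_le hεδ.le] at ht
        have ht0 : 0 < t := lt_of_lt_of_le hε0 ht.1
        have htc : (t : ℂ) ≠ 0 := Complex.ofReal_ne_zero.2 ht0.ne'
        show f a T (2 * a + t) + f a T (2 * a - t) = g a T t
        unfold f g
        have h1 : (((2 * a + t : ℝ)) : ℂ) - 2 * (a : ℂ) = (t : ℂ) := by push_cast; ring
        have h2 : (((2 * a - t : ℝ)) : ℂ) - 2 * (a : ℂ) = -(t : ℂ) := by push_cast; ring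
        rw [h1, h2, div_neg, ← sub_eq_add_neg, ← sub_div]
      have hg1 : IntervalIntegrable (g a T) volume 0 ε :=
        hgI.mono_set (by rw [uIcc_of_le hε0.le, uIcc_of_le hδpos.le]
                         exact Icc_subset_Icc le_rfl hεδ.le)
      have hg2 : IntervalIntegrable (g a T) volume ε δ :=
        hgI.mono_set (by rw [uIcc_of_le hεδ.le, uIcc_of_le hδpos.le]
                         exact Icc_subset_Icc hε0.le le_rfl)
      have e6 : ∫ t in ε..δ, g a T t = N - ∫ t in (0:ℝ)..ε, g a T t := by
        rw [hN, ← intervalIntegral.integral_add_adjacent_intervals hg1 hg2]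
        ring
      rw [e3, e4]
      linear_combination e5 + e6
    have hev : (fun ε : ℝ => A + B + (N - ∫ t in (0:ℝ)..ε, g a T t))
        =ᶠ[nhdsWithin 0 (Ioi (0:ℝ))]
        (fun ε : ℝ => ∫ ξ in {ξ : ℝ | a < ξ ∧ ξ < 3 * a ∧ ε < |ξ - 2 * a|}, f a T ξ) := by
      filter_upwards [Ioo_mem_nhdsGT_of_mem (⟨le_refl (0:ℝ), hδpos⟩ : (0:ℝ) ∈ Ico (0:ℝ) δ)]
        with ε hε
      exact (key ε hε).symm
    apply Tendsto.congr' hev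
    have h0 : Tendsto (fun ε : ℝ => ∫ t in (0:ℝ)..ε, g a T t)
        (nhdsWithin 0 (Ioi (0:ℝ))) (nhds 0) := by
      apply squeeze_zero_norm' (a := fun ε : ℝ => 2 * lam a T * |ε|)
      · filter_upwards [Ioo_mem_nhdsGT_of_mem (⟨le_refl (0:ℝ), hδpos⟩ : (0:ℝ) ∈ Ico (0:ℝ) δ)]
          with ε hε
        have hb : ∀ x ∈ uIoc (0:ℝ) ε, ‖g a T x‖ ≤ 2 * lam a T := by
          intro x hx
          rw [uIoc_of_le hε.1.le] at hx
          exact norm_g_le ha hT hx.1 (by linarith [hx.2, hε.2, hδa] : x ≤ a)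
        have := intervalIntegral.norm_integral_le_of_norm_le_const hb
        rw [sub_zero] at this
        exact this
      · have hc : Tendsto (fun ε : ℝ => 2 * lam a T * |ε|) (nhds 0) (nhds (2 * lam a T * |0|)) := by
          apply Tendsto.mul tendsto_const_nhds
          exact (continuous_abs).tendsto 0
        rw [abs_zero, mul_zero] at hc
        exact hc.mono_left nhdsWithin_le_nhds
    have := Tendsto.sub (tendsto_const_nhds (x := N)) h0
    rw [sub_zero] at this
    have h2 := Tendsto.add (tendsto_const_nhds (x := A + B)) this
    exact h2
  · -- the bound
    have hNb : ‖N‖ ≤ 2 := by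
      have hb : ∀ x ∈ uIoc (0:ℝ) δ, ‖g a T x‖ ≤ 2 * lam a T := by
        intro x hx
        rw [uIoc_of_le hδpos.le] at hx
        exact norm_g_le ha hT hx.1 (le_trans hx.2 hδa)
      have := intervalIntegral.norm_integral_le_of_norm_le_const hb
      rw [sub_zero, abs_of_pos hδpos] at this
      have h2 := del_lam_le_one ha hT
      nlinarith
    rcases le_total a (lam a T)⁻¹ with hcase | hcase
    · have hda : δ = a := min_eq_left hcase
      have hA0 : A = 0 := by
        rw [hA, hda, show 2 * a - a = a by ring, intervalIntegral.integral_same]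
      have hB0 : B = 0 := by
        rw [hB, hda, show 2 * a + a = 3 * a by ring, intervalIntegral.integral_same]
      rw [hA0, hB0, zero_add, zero_add]
      linarith
    · have hAb : ‖A‖ ≤ 504 := by
        apply side_bound ha hT hcase a (2 * a - δ) (by linarith)
          (Icc_subset_Icc le_rfl (by linarith))
        intro ξ hξ
        rw [abs_sub_comm]
        exact le_trans (by linarith [hξ.2]) (le_abs_self _)
      have hBb : ‖B‖ ≤ 504 := by
        apply side_bound ha hT hcase (2 * a + δ) (3 * a) (by linarith)
          (Icc_subset_Icc (by linarith) le_rfl)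
        intro ξ hξ
        exact le_trans (by linarith [hξ.1]) (le_abs_self _)
      calc ‖A + B + N‖ ≤ ‖A + B‖ + ‖N‖ := norm_add_le _ _
        _ ≤ (‖A‖ + ‖B‖) + ‖N‖ := by linarith [norm_add_le A B]
        _ ≤ 2000 := by linarith
end

section
/- sup over 1/2 < a < 1 and T > 0 of |∫_{-θ₁}^{θ₁} e^{iT cos θ}/(2a - 1 - iθ) dθ| is finite, for any fixed θ₁ ∈ (0, π/2). -/
open MeasureTheory Filter Set

lemma aux_int (c θ₁ : ℝ) (hc : 0 < c) :
    ∫ θ in (-θ₁)..θ₁, c / (c ^ 2 + θ ^ 2) =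
      Real.arctan (θ₁ / c) - Real.arctan (-θ₁ / c) := by
  have h : ∀ θ : ℝ, HasDerivAt (fun x => Real.arctan (x / c)) (c / (c ^ 2 + θ ^ 2)) θ := by
    intro θ
    have h1 := (Real.hasDerivAt_arctan (θ / c)).comp θ ((hasDerivAt_id θ).div_const c)
    refine h1.congr_deriv ?_
    have hc' : c ≠ 0 := hc.ne'
    field_simp
  rw [intervalIntegral.integral_eq_sub_of_hasDerivAt (fun θ _ => h θ)]
  · apply Continuous.intervalIntegrable
    exact continuous_const.div (by continuity) (fun θ => by positivity)

/-- For fixed `θ₁ ∈ (0, π/2)`, the integrals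
`∫_{-θ₁}^{θ₁} e^{iT cos θ}/(2a - 1 - iθ) dθ` are bounded uniformly over
`a ∈ (1/2, 1)` and `T > 0`. -/
theorem stmt5 (θ₁ : ℝ) (hθ₁ : θ₁ ∈ Set.Ioo 0 (Real.pi / 2)) :
    ∃ C : ℝ, ∀ a T : ℝ, 1 / 2 < a → a < 1 → 0 < T →
      ‖∫ θ in (-θ₁)..θ₁,
          Complex.exp (Complex.I * (T : ℂ) * (Real.cos θ : ℂ)) /
            (2 * (a : ℂ) - 1 - Complex.I * (θ : ℂ))‖ ≤ C := by
  refine ⟨Real.pi, fun a T ha ha1 hT => ?_⟩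
  set c : ℝ := 2 * a - 1 with hcdef
  have hc : 0 < c := by simp [hcdef]; linarith
  have hden : ∀ θ : ℝ, (2 * (a : ℂ) - 1 - Complex.I * (θ : ℂ)) ≠ 0 := by
    intro θ h
    have := congrArg Complex.re h
    simp [Complex.sub_re, Complex.mul_re] at this
    linarith
  have hden' : ∀ θ : ℝ, (2 * (a : ℂ) - 1 + Complex.I * (θ : ℂ)) ≠ 0 := by
    intro θ h
    have := congrArg Complex.re h
    simp [Complex.add_re, Complex.mul_re] at this
    linarith
  set f : ℝ → ℂ := fun θ =>
    Complex.exp (Complex.I * (T : ℂ) * (Real.cos θ : ℂ)) /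
      (2 * (a : ℂ) - 1 - Complex.I * (θ : ℂ)) with hf
  have hcont : Continuous f := by
    apply Continuous.div
    · exact Complex.continuous_exp.comp (by continuity)
    · continuity
    · exact fun θ => hden θ
  have hcont2 : Continuous (fun θ => f (-θ)) := hcont.comp continuous_neg
  -- symmetry
  have hsym : ∫ θ in (-θ₁)..θ₁, f (-θ) = ∫ θ in (-θ₁)..θ₁, f θ := by
    rw [intervalIntegral.integral_comp_neg f]
    simp
  have key : ∫ θ in (-θ₁)..θ₁, f θ =
      ∫ θ in (-θ₁)..θ₁,
        Complex.exp (Complex.I * (T : ℂ) * (Real.cos θ : ℂ)) * ((c : ℂ) / (c ^ 2 + θ ^ 2)) := by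
    have h2 : (2 : ℂ) * ∫ θ in (-θ₁)..θ₁, f θ
        = ∫ θ in (-θ₁)..θ₁, (f θ + f (-θ)) := by
      rw [intervalIntegral.integral_add (hcont.intervalIntegrable _ _)
        (hcont2.intervalIntegrable _ _), hsym]
      ring
    have h3 : ∀ θ : ℝ, f θ + f (-θ) =
        2 * (Complex.exp (Complex.I * (T : ℂ) * (Real.cos θ : ℂ)) * ((c : ℂ) / (c ^ 2 + θ ^ 2))) := by
      intro θ
      have hne := hden θ
      have hne' := hden' θ
      have hcos : Real.cos (-θ) = Real.cos θ := Real.cos_neg θ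
      simp only [hf, hcos]
      rw [Complex.ofReal_neg]
      have hccoe : (c : ℂ) = 2 * (a : ℂ) - 1 := by
        simp [hcdef]
      have hdz : (c : ℂ) ^ 2 + (θ : ℂ) ^ 2 ≠ 0 := by
        rw [hccoe]
        intro h
        apply hne
        have : (2 * (a : ℂ) - 1 - Complex.I * θ) * (2 * (a : ℂ) - 1 + Complex.I * θ) = 0 := by
          rw [← h]; ring_nf; rw [Complex.I_sq]; ring
        rcases mul_eq_zero.1 this with h | h
        · exact h
        · exact absurd h hne'
      rw [hccoe]
      rw [mul_neg, sub_neg_eq_add]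
      have hdz2 : ((2 * (a : ℂ) - 1) ^ 2 + (θ : ℂ) ^ 2) ≠ 0 := hccoe ▸ hdz
      have hprod : (2 * (a : ℂ) - 1 - Complex.I * θ) * (2 * (a : ℂ) - 1 + Complex.I * θ)
          = (2 * (a : ℂ) - 1) ^ 2 + (θ : ℂ) ^ 2 := by
        ring_nf
        simp only [Complex.I_sq]
        ring
      rw [div_add_div _ _ hne hne', hprod, div_eq_iff hdz2]
      field_simp
      ring
    have h4 : (∫ θ in (-θ₁)..θ₁, (f θ + f (-θ)))
        = ∫ θ in (-θ₁)..θ₁,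
            2 * (Complex.exp (Complex.I * (T : ℂ) * (Real.cos θ : ℂ)) * ((c : ℂ) / (c ^ 2 + θ ^ 2))) :=
      intervalIntegral.integral_congr fun θ _ => h3 θ
    rw [intervalIntegral.integral_const_mul] at h4
    exact mul_left_cancel₀ (two_ne_zero' ℂ) (h2.trans h4)
  rw [hf] at key ⊢
  rw [key]
  have hle : (-θ₁) ≤ θ₁ := by linarith [hθ₁.1]
  calc ‖∫ θ in (-θ₁)..θ₁,
        Complex.exp (Complex.I * (T : ℂ) * (Real.cos θ : ℂ)) * ((c : ℂ) / (c ^ 2 + θ ^ 2))‖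
      ≤ ∫ θ in (-θ₁)..θ₁,
          ‖Complex.exp (Complex.I * (T : ℂ) * (Real.cos θ : ℂ)) * ((c : ℂ) / (c ^ 2 + θ ^ 2))‖ :=
        intervalIntegral.norm_integral_le_integral_norm hle
    _ = ∫ θ in (-θ₁)..θ₁, c / (c ^ 2 + θ ^ 2) := by
        apply intervalIntegral.integral_congr
        intro θ _
        dsimp only
        rw [norm_mul]
        have h1 : ‖Complex.exp (Complex.I * (T : ℂ) * (Real.cos θ : ℂ))‖ = 1 := by
          rw [Complex.norm_exp]
          simp [Complex.mul_re, Complex.mul_im]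
        have h2 : ((c : ℂ) / ((c : ℂ) ^ 2 + (θ : ℂ) ^ 2)) = ((c / (c ^ 2 + θ ^ 2) : ℝ) : ℂ) := by
          push_cast; ring
        rw [h1, h2, Complex.norm_real, Real.norm_of_nonneg (by positivity), one_mul]
    _ = Real.arctan (θ₁ / c) - Real.arctan (-θ₁ / c) := aux_int c θ₁ hc
    _ ≤ Real.pi := by
        have := Real.arctan_lt_pi_div_two (θ₁ / c)
        have := Real.neg_pi_div_two_lt_arctan (-θ₁ / c)
        linarith
end

section
/- If q ∈ L²(ℝ⁺), then (1/T) ∫₀^T (∫_{t-√t}^{t+√t} |q(x)| dx)² dt → 0 as T → ∞. -/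
open MeasureTheory Filter Set
open scoped ENNReal

lemma stmt6_sqrt_le {t x : ℝ} (hx : 0 ≤ x) (h : t - Real.sqrt t ≤ x) :
    Real.sqrt t ≤ 1 + Real.sqrt x := by
  rcases le_or_gt t 0 with ht | ht
  · rw [Real.sqrt_eq_zero_of_nonpos ht]
    positivity
  · have hst : Real.sqrt t ^ 2 = t := Real.sq_sqrt ht.le
    rcases le_or_gt (Real.sqrt t) 1 with h1 | h1
    · have := Real.sqrt_nonneg x; linarith
    · have h2 : Real.sqrt t - 1 ≤ Real.sqrt x := by
        rw [Real.le_sqrt (by linarith) hx]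
        nlinarith
      linarith

-- Cauchy-Schwarz for lintegral
lemma stmt6_CS {μ : Measure ℝ} {f : ℝ → ℝ≥0∞} (hf : AEMeasurable f μ) :
    (∫⁻ x, f x ∂μ) ^ 2 ≤ μ Set.univ * ∫⁻ x, f x ^ 2 ∂μ := by
  have hpq : Real.HolderConjugate 2 2 := Real.holderConjugate_iff.2 ⟨one_lt_two, by norm_num⟩
  have h := ENNReal.lintegral_mul_le_Lp_mul_Lq μ hpq hf aemeasurable_const (g := fun _ => 1)
  simp only [mul_one, Pi.mul_apply] at h
  have h2 : (∫⁻ x, f x ∂μ) ^ 2 ≤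
      ((∫⁻ a, f a ^ (2:ℝ) ∂μ) ^ (1/(2:ℝ)) * (∫⁻ a, (1:ℝ≥0∞) ^ (2:ℝ) ∂μ) ^ (1/(2:ℝ))) ^ 2 := by
    gcongr
  calc (∫⁻ x, f x ∂μ) ^ 2 ≤ _ := h2
    _ = (∫⁻ a, f a ^ (2:ℝ) ∂μ) * (∫⁻ a, (1:ℝ≥0∞) ^ (2:ℝ) ∂μ) := by
        rw [mul_pow, ← ENNReal.rpow_natCast (_ ^ (1/(2:ℝ))) 2, ← ENNReal.rpow_natCast (_ ^ (1/(2:ℝ))) 2,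
          ← ENNReal.rpow_mul, ← ENNReal.rpow_mul]
        norm_num
    _ = μ Set.univ * ∫⁻ x, f x ^ 2 ∂μ := by
        simp only [ENNReal.one_rpow, lintegral_one, lintegral_const, one_mul]
        rw [mul_comm]
        congr 1
        refine lintegral_congr fun x => ?_
        rw [← ENNReal.rpow_natCast (f x) 2]
        norm_num

lemma stmt6_pt (q' : ℝ → ℝ) (hm : Measurable q')
    (hq' : MemLp q' 2 (volume.restrict (Set.Ioi (0:ℝ)))) (t : ℝ) :
    ENNReal.ofReal ((∫ x in Set.Icc (max 0 (t - Real.sqrt t)) (t + Real.sqrt t), |q' x|) ^ 2)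
      ≤ ENNReal.ofReal (2 * Real.sqrt t) *
        ∫⁻ x in Set.Ioc (max 0 (t - Real.sqrt t)) (t + Real.sqrt t),
          ENNReal.ofReal (q' x ^ 2) := by
  set a := max 0 (t - Real.sqrt t) with ha
  set b := t + Real.sqrt t with hb
  have ha0 : 0 ≤ a := le_max_left _ _
  have hsub : Set.Ioc a b ⊆ Set.Ioi (0:ℝ) := fun x hx => lt_of_le_of_lt ha0 hx.1
  have hmem : MemLp q' 2 (volume.restrict (Set.Ioc a b)) :=
    hq'.mono_measure (Measure.restrict_mono hsub le_rfl)
  haveI : IsFiniteMeasure (volume.restrict (Set.Ioc a b)) := ⟨by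
    rw [Measure.restrict_apply_univ]; exact measure_Ioc_lt_top⟩
  have hint : Integrable q' (volume.restrict (Set.Ioc a b)) := hmem.integrable one_le_two
  have hF : ∫ x in Set.Icc a b, |q' x| = ∫ x in Set.Ioc a b, |q' x| := integral_Icc_eq_integral_Ioc
  have hFnn : 0 ≤ ∫ x in Set.Ioc a b, |q' x| := integral_nonneg fun x => abs_nonneg _
  have hof : ENNReal.ofReal (∫ x in Set.Ioc a b, |q' x|) =
      ∫⁻ x in Set.Ioc a b, ENNReal.ofReal |q' x| :=
    ofReal_integral_eq_lintegral_ofReal hint.abs (ae_of_all _ fun x => abs_nonneg _)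
  rw [hF, ENNReal.ofReal_pow hFnn, hof]
  have hfmeas : AEMeasurable (fun x => ENNReal.ofReal |q' x|) (volume.restrict (Set.Ioc a b)) :=
    (ENNReal.measurable_ofReal.comp hm.abs).aemeasurable
  calc (∫⁻ x in Set.Ioc a b, ENNReal.ofReal |q' x|) ^ 2
      ≤ (volume.restrict (Set.Ioc a b)) Set.univ *
        ∫⁻ x in Set.Ioc a b, ENNReal.ofReal |q' x| ^ 2 := stmt6_CS hfmeas
    _ ≤ ENNReal.ofReal (2 * Real.sqrt t) *
        ∫⁻ x in Set.Ioc a b, ENNReal.ofReal (q' x ^ 2) := by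
        apply mul_le_mul'
        · rw [Measure.restrict_apply_univ, Real.volume_Ioc]
          apply ENNReal.ofReal_le_ofReal
          have h2 : t - Real.sqrt t ≤ a := le_max_right _ _
          rw [hb]; linarith
        · apply lintegral_mono fun x => ?_
          rw [← ENNReal.ofReal_pow (abs_nonneg _), sq_abs]

lemma stmt6_key (q' : ℝ → ℝ) (hm : Measurable q')
    (hq' : MemLp q' 2 (volume.restrict (Set.Ioi (0:ℝ)))) {T : ℝ} (hT : 0 < T) :
    ∫⁻ t in Set.Ioc (0:ℝ) T,
        ENNReal.ofReal
          ((∫ x in Set.Icc (max 0 (t - Real.sqrt t)) (t + Real.sqrt t), |q' x|) ^ 2)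
      ≤ ∫⁻ x in Set.Ioc (0:ℝ) (T + Real.sqrt T),
          ENNReal.ofReal (8 * (1 + x)) * ENNReal.ofReal (q' x ^ 2) := by
  set G : ℝ → ℝ≥0∞ := fun x => ENNReal.ofReal (q' x ^ 2) with hG
  have hGmeas : Measurable G := ENNReal.measurable_ofReal.comp (hm.pow_const 2)
  set K : Set (ℝ × ℝ) :=
    {p | 0 < p.2 ∧ p.1 - Real.sqrt p.1 ≤ p.2 ∧ p.2 ≤ p.1 + Real.sqrt p.1} with hK
  have hsqm : Measurable fun s : ℝ => Real.sqrt s := Real.continuous_sqrt.measurable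
  have hKmeas : MeasurableSet K := by
    have h1 : MeasurableSet {p : ℝ × ℝ | 0 < p.2} :=
      measurableSet_lt measurable_const measurable_snd
    have h2 : MeasurableSet {p : ℝ × ℝ | p.1 - Real.sqrt p.1 ≤ p.2} :=
      measurableSet_le (measurable_fst.sub (hsqm.comp measurable_fst)) measurable_snd
    have h3 : MeasurableSet {p : ℝ × ℝ | p.2 ≤ p.1 + Real.sqrt p.1} :=
      measurableSet_le measurable_snd (measurable_fst.add (hsqm.comp measurable_fst))
    exact h1.inter (h2.inter h3)
  set c : ℝ → ℝ≥0∞ := fun x => ENNReal.ofReal (2 * (1 + Real.sqrt x)) * G x with hc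
  have hcmeas : Measurable c :=
    (ENNReal.measurable_ofReal.comp
      ((measurable_const.mul (measurable_const.add hsqm)))).mul hGmeas
  set kk : ℝ × ℝ → ℝ≥0∞ := K.indicator (fun p => c p.2) with hkk
  have hkkmeas : Measurable kk := (hcmeas.comp measurable_snd).indicator hKmeas
  have step1 : ∫⁻ t in Set.Ioc (0:ℝ) T,
      ENNReal.ofReal
        ((∫ x in Set.Icc (max 0 (t - Real.sqrt t)) (t + Real.sqrt t), |q' x|) ^ 2)
      ≤ ∫⁻ t in Set.Ioc (0:ℝ) T, ∫⁻ x, kk (t, x) := by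
    refine setLIntegral_mono_ae' measurableSet_Ioc (ae_of_all _ fun t ht => ?_)
    have ht0 : 0 < t := ht.1
    set a := max 0 (t - Real.sqrt t) with ha
    set b := t + Real.sqrt t with hb
    have ha0 : 0 ≤ a := le_max_left _ _
    calc ENNReal.ofReal ((∫ x in Set.Icc a b, |q' x|) ^ 2)
        ≤ ENNReal.ofReal (2 * Real.sqrt t) * ∫⁻ x in Set.Ioc a b, G x :=
          stmt6_pt q' hm hq' t
      _ = ∫⁻ x in Set.Ioc a b, ENNReal.ofReal (2 * Real.sqrt t) * G x :=
          (lintegral_const_mul _ hGmeas).symm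
      _ = ∫⁻ x, (Set.Ioc a b).indicator
            (fun x => ENNReal.ofReal (2 * Real.sqrt t) * G x) x :=
          (lintegral_indicator measurableSet_Ioc _).symm
      _ ≤ ∫⁻ x, kk (t, x) := by
          refine lintegral_mono fun x => ?_
          by_cases hx : x ∈ Set.Ioc a b
          · rw [Set.indicator_of_mem hx]
            have hx0 : 0 < x := lt_of_le_of_lt ha0 hx.1
            have htx : t - Real.sqrt t ≤ x := ((le_max_right _ _).trans_lt hx.1).le
            have hxK : (t, x) ∈ K := ⟨hx0, htx, hx.2⟩
            rw [hkk, Set.indicator_of_mem hxK]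
            refine mul_le_mul_left (ENNReal.ofReal_le_ofReal ?_) _
            have := stmt6_sqrt_le hx0.le htx
            linarith
          · rw [Set.indicator_of_notMem hx]; exact zero_le
  have hunc : AEMeasurable (Function.uncurry fun t x => kk (t, x))
      ((volume.restrict (Set.Ioc (0:ℝ) T)).prod volume) := hkkmeas.aemeasurable
  have step2 : ∫⁻ t in Set.Ioc (0:ℝ) T, ∫⁻ x, kk (t, x)
      = ∫⁻ x, ∫⁻ t in Set.Ioc (0:ℝ) T, kk (t, x) :=
    lintegral_lintegral_swap hunc
  have step3 : ∫⁻ x, ∫⁻ t in Set.Ioc (0:ℝ) T, kk (t, x)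
      ≤ ∫⁻ x, (Set.Ioc (0:ℝ) (T + Real.sqrt T)).indicator
          (fun x => ENNReal.ofReal (2 * (1 + Real.sqrt x)) * c x) x := by
    refine lintegral_mono fun x => ?_
    have hSmeas : MeasurableSet {t : ℝ | (t, x) ∈ K} :=
      (measurable_id.prodMk measurable_const) hKmeas
    have hx1 : ∫⁻ t in Set.Ioc (0:ℝ) T, kk (t, x)
        = c x * volume ({t : ℝ | (t, x) ∈ K} ∩ Set.Ioc (0:ℝ) T) := by
      have heq : (fun t => kk (t, x))
          = fun t => ({t : ℝ | (t, x) ∈ K}).indicator (fun _ => c x) t := by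
        funext t
        by_cases h : (t, x) ∈ K <;>
          simp [hkk, Set.indicator_apply, h]
      rw [show (∫⁻ t in Set.Ioc (0:ℝ) T, kk (t, x))
          = ∫⁻ t in Set.Ioc (0:ℝ) T,
              ({t : ℝ | (t, x) ∈ K}).indicator (fun _ => c x) t from
          by rw [← heq],
        lintegral_indicator hSmeas _, setLIntegral_const,
        Measure.restrict_apply hSmeas]
    rw [hx1]
    by_cases hxmem : x ∈ Set.Ioc (0:ℝ) (T + Real.sqrt T)
    · rw [Set.indicator_of_mem hxmem]
      have hx0 : 0 < x := hxmem.1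
      have hsub : {t : ℝ | (t, x) ∈ K} ∩ Set.Ioc (0:ℝ) T
          ⊆ Set.Icc (x - (1 + Real.sqrt x)) (x + (1 + Real.sqrt x)) := by
        rintro t ⟨⟨-, h1, h2⟩, ht0, -⟩
        have hst : Real.sqrt t ≤ 1 + Real.sqrt x := stmt6_sqrt_le hx0.le h1
        have hts : 0 ≤ Real.sqrt t := Real.sqrt_nonneg t
        constructor <;> [nlinarith; nlinarith]
      calc c x * volume ({t : ℝ | (t, x) ∈ K} ∩ Set.Ioc (0:ℝ) T)
          ≤ c x * ENNReal.ofReal (2 * (1 + Real.sqrt x)) := by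
            refine mul_le_mul_right ?_ _
            refine (measure_mono hsub).trans ?_
            rw [Real.volume_Icc]
            apply ENNReal.ofReal_le_ofReal
            ring_nf
            exact le_refl _
        _ = ENNReal.ofReal (2 * (1 + Real.sqrt x)) * c x := mul_comm _ _
    · have hempty : {t : ℝ | (t, x) ∈ K} ∩ Set.Ioc (0:ℝ) T = ∅ := by
        ext t
        simp only [Set.mem_inter_iff, Set.mem_empty_iff_false, iff_false, not_and]
        rintro ⟨hx0, h1, h2⟩ ht
        exact hxmem ⟨hx0, h2.trans (add_le_add ht.2 (Real.sqrt_le_sqrt ht.2))⟩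
      rw [hempty]
      simp
  have step4 : ∫⁻ x, (Set.Ioc (0:ℝ) (T + Real.sqrt T)).indicator
        (fun x => ENNReal.ofReal (2 * (1 + Real.sqrt x)) * c x) x
      ≤ ∫⁻ x in Set.Ioc (0:ℝ) (T + Real.sqrt T),
          ENNReal.ofReal (8 * (1 + x)) * G x := by
    rw [lintegral_indicator measurableSet_Ioc]
    refine setLIntegral_mono_ae' measurableSet_Ioc (ae_of_all _ fun x hx => ?_)
    have hx0 : 0 < x := hx.1
    rw [hc, ← mul_assoc, ← ENNReal.ofReal_mul (by positivity)]
    refine mul_le_mul_left (ENNReal.ofReal_le_ofReal ?_) _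
    nlinarith [Real.sq_sqrt hx0.le, Real.sqrt_nonneg x, sq_nonneg (Real.sqrt x - 1)]
  exact step1.trans (step2.le.trans (step3.trans step4))

lemma stmt6_tail (G : ℝ → ℝ≥0∞) (hGmeas : Measurable G)
    (hfin : ∫⁻ x in Set.Ioi (0:ℝ), G x ≠ ⊤) :
    Tendsto (fun n : ℕ => ∫⁻ x in Set.Ioi ((n:ℕ):ℝ), G x) atTop (nhds 0) := by
  set μG := volume.withDensity G with hμG
  have happ : ∀ A : ℝ, μG (Set.Ioi A) = ∫⁻ x in Set.Ioi A, G x := fun A =>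
    withDensity_apply _ measurableSet_Ioi
  have h0 : μG (Set.Ioi ((0:ℕ):ℝ)) ≠ ⊤ := by rw [happ]; simpa using hfin
  have hmono : Antitone fun n : ℕ => Set.Ioi ((n:ℕ):ℝ) := fun m n h =>
    Set.Ioi_subset_Ioi (by exact_mod_cast h)
  have hinter : ⋂ n : ℕ, Set.Ioi ((n:ℕ):ℝ) = ∅ := by
    ext x
    simp only [Set.mem_iInter, Set.mem_Ioi, Set.mem_empty_iff_false, iff_false, not_forall,
      not_lt]
    obtain ⟨n, hn⟩ := exists_nat_gt x
    exact ⟨n, hn.le⟩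
  have h := tendsto_measure_iInter_atTop (μ := μG) (s := fun n : ℕ => Set.Ioi ((n:ℕ):ℝ))
    (fun n => measurableSet_Ioi.nullMeasurableSet) hmono ⟨0, h0⟩
  rw [hinter] at h
  simp only [measure_empty] at h
  exact h.congr fun n => happ _

/-- If `q ∈ L²(ℝ⁺)`, then
`(1/T) ∫₀^T (∫_{max(0, t-√t)}^{t+√t} |q(x)| dx)² dt → 0` as `T → ∞`. -/
theorem stmt6 (q : ℝ → ℝ)
    (hq : MemLp q 2 (volume.restrict (Set.Ioi (0 : ℝ)))) :
    Tendsto (fun T : ℝ =>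
        (1 / T) * ∫ t in Set.Ioc (0 : ℝ) T,
          (∫ x in Set.Icc (max 0 (t - Real.sqrt t)) (t + Real.sqrt t), |q x|) ^ 2)
      atTop (nhds 0) := by
  obtain ⟨q', hmq', hae⟩ : ∃ q' : ℝ → ℝ, Measurable q' ∧
      q =ᵐ[volume.restrict (Set.Ioi (0:ℝ))] q' :=
    ⟨hq.1.mk q, hq.1.stronglyMeasurable_mk.measurable, hq.1.ae_eq_mk⟩
  have hq' : MemLp q' 2 (volume.restrict (Set.Ioi (0:ℝ))) := hq.ae_eq hae
  have haev : ∀ᵐ x ∂(volume : Measure ℝ), x ∈ Set.Ioi (0:ℝ) → q x = q' x :=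
    (ae_restrict_iff' measurableSet_Ioi).1 hae
  have hne : ∀ᵐ x : ℝ ∂volume, x ≠ 0 := by
    have h1 : {x : ℝ | ¬ x ≠ 0} = {0} := by ext y; simp
    rw [ae_iff, h1]
    exact Real.volume_singleton
  have hIeq : ∀ T : ℝ,
      (∫ t in Set.Ioc (0:ℝ) T,
        (∫ x in Set.Icc (max 0 (t - Real.sqrt t)) (t + Real.sqrt t), |q x|) ^ 2)
      = ∫ t in Set.Ioc (0:ℝ) T,
        (∫ x in Set.Icc (max 0 (t - Real.sqrt t)) (t + Real.sqrt t), |q' x|) ^ 2 := by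
    intro T
    refine setIntegral_congr_ae measurableSet_Ioc (ae_of_all _ fun t ht => ?_)
    congr 1
    refine setIntegral_congr_ae measurableSet_Icc ?_
    filter_upwards [haev, hne] with x h1 h2 hx
    have hx0 : 0 < x := lt_of_le_of_ne (le_trans (le_max_left 0 _) hx.1) (Ne.symm h2)
    rw [h1 hx0]
  set G : ℝ → ℝ≥0∞ := fun x => ENNReal.ofReal (q' x ^ 2) with hG
  have hGmeas : Measurable G := ENNReal.measurable_ofReal.comp (hmq'.pow_const 2)
  set M := ∫⁻ x in Set.Ioi (0:ℝ), G x with hMdef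
  have hM : M ≠ ⊤ := hq'.integrable_sq.lintegral_lt_top.ne
  have htail := stmt6_tail G hGmeas hM
  rw [Metric.tendsto_atTop]
  intro ε hε
  have hε48 : (0:ℝ≥0∞) < ENNReal.ofReal (ε/48) := ENNReal.ofReal_pos.2 (by linarith)
  obtain ⟨n, hn⟩ := (htail.eventually (gt_mem_nhds hε48)).exists
  set A : ℝ := ((n:ℕ):ℝ) with hA
  have hA0 : (0:ℝ) ≤ A := Nat.cast_nonneg n
  set C : ℝ := 8 * (1 + A) * M.toReal with hCdef
  have hC0 : 0 ≤ C := by positivity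
  refine ⟨max (max 1 A) (2*C/ε + 1), fun T hT => ?_⟩
  have hT1 : 1 ≤ T := le_trans (le_trans (le_max_left 1 A) (le_max_left _ _)) hT
  have hTA : A ≤ T := le_trans (le_trans (le_max_right 1 A) (le_max_left _ _)) hT
  have hTC : 2*C/ε + 1 ≤ T := le_trans (le_max_right _ _) hT
  have hT0 : 0 < T := lt_of_lt_of_le one_pos hT1
  have hsT : Real.sqrt T ≤ T := by
    nlinarith [Real.sq_sqrt hT0.le, sq_nonneg (Real.sqrt T - 1)]
  have hsT0 : 0 ≤ Real.sqrt T := Real.sqrt_nonneg T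
  set J : ℝ≥0∞ := ∫⁻ x in Set.Ioc (0:ℝ) (T + Real.sqrt T),
      ENNReal.ofReal (8 * (1 + x)) * G x with hJdef
  set R : ℝ≥0∞ := ENNReal.ofReal (8*(1+A)) * M + ENNReal.ofReal (24*T) * ENNReal.ofReal (ε/48)
    with hRdef
  have hAT : A ≤ T + Real.sqrt T := by linarith
  -- J ≤ R
  have hJR : J ≤ R := by
    rw [hJdef, ← Set.Ioc_union_Ioc_eq_Ioc hA0 hAT,
      lintegral_union measurableSet_Ioc (Set.Ioc_disjoint_Ioc_of_le le_rfl)]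
    refine add_le_add ?_ ?_
    · calc ∫⁻ x in Set.Ioc (0:ℝ) A, ENNReal.ofReal (8 * (1 + x)) * G x
          ≤ ∫⁻ x in Set.Ioc (0:ℝ) A, ENNReal.ofReal (8 * (1 + A)) * G x :=
            setLIntegral_mono_ae' measurableSet_Ioc (ae_of_all _ fun x hx =>
              mul_le_mul_left (ENNReal.ofReal_le_ofReal (by linarith [hx.2])) _)
        _ = ENNReal.ofReal (8 * (1 + A)) * ∫⁻ x in Set.Ioc (0:ℝ) A, G x :=
            lintegral_const_mul _ hGmeas
        _ ≤ ENNReal.ofReal (8 * (1 + A)) * M :=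
            mul_le_mul_right (lintegral_mono_set fun x hx => hx.1) _
    · calc ∫⁻ x in Set.Ioc A (T + Real.sqrt T), ENNReal.ofReal (8 * (1 + x)) * G x
          ≤ ∫⁻ x in Set.Ioc A (T + Real.sqrt T), ENNReal.ofReal (24 * T) * G x :=
            setLIntegral_mono_ae' measurableSet_Ioc (ae_of_all _ fun x hx =>
              mul_le_mul_left (ENNReal.ofReal_le_ofReal (by linarith [hx.2])) _)
        _ = ENNReal.ofReal (24 * T) * ∫⁻ x in Set.Ioc A (T + Real.sqrt T), G x :=
            lintegral_const_mul _ hGmeas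
        _ ≤ ENNReal.ofReal (24 * T) * ENNReal.ofReal (ε/48) := by
            refine mul_le_mul_right ?_ _
            exact le_trans (lintegral_mono_set fun x hx => hx.1) hn.le
  have hRne : R ≠ ⊤ := by
    rw [hRdef]
    exact ENNReal.add_ne_top.2 ⟨ENNReal.mul_ne_top ENNReal.ofReal_ne_top hM,
      ENNReal.mul_ne_top ENNReal.ofReal_ne_top ENNReal.ofReal_ne_top⟩
  have hJne : J ≠ ⊤ := ne_top_of_le_ne_top hRne hJR
  have hRtoReal : R.toReal = C + T * (ε/2) := by
    rw [hRdef, ENNReal.toReal_add (ENNReal.mul_ne_top ENNReal.ofReal_ne_top hM)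
      (ENNReal.mul_ne_top ENNReal.ofReal_ne_top ENNReal.ofReal_ne_top),
      ENNReal.toReal_mul, ENNReal.toReal_mul, ENNReal.toReal_ofReal (by positivity),
      ENNReal.toReal_ofReal (by positivity), ENNReal.toReal_ofReal (by positivity), hCdef]
    ring
  -- core: the real integral is ≤ J.toReal
  have hIle : (∫ t in Set.Ioc (0:ℝ) T,
      (∫ x in Set.Icc (max 0 (t - Real.sqrt t)) (t + Real.sqrt t), |q' x|) ^ 2) ≤ J.toReal := by
    by_cases hInt : Integrable (fun t =>
        (∫ x in Set.Icc (max 0 (t - Real.sqrt t)) (t + Real.sqrt t), |q' x|) ^ 2)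
        (volume.restrict (Set.Ioc (0:ℝ) T))
    · rw [integral_eq_lintegral_of_nonneg_ae (ae_of_all _ fun t => sq_nonneg _)
        hInt.aestronglyMeasurable]
      exact ENNReal.toReal_mono hJne (stmt6_key q' hmq' hq' hT0)
    · rw [integral_undef hInt]
      exact ENNReal.toReal_nonneg
  have hInn : 0 ≤ ∫ t in Set.Ioc (0:ℝ) T,
      (∫ x in Set.Icc (max 0 (t - Real.sqrt t)) (t + Real.sqrt t), |q x|) ^ 2 :=
    integral_nonneg fun t => sq_nonneg _
  rw [Real.dist_eq, sub_zero, abs_of_nonneg (mul_nonneg (by positivity) hInn)]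
  calc (1 / T) * ∫ t in Set.Ioc (0:ℝ) T,
        (∫ x in Set.Icc (max 0 (t - Real.sqrt t)) (t + Real.sqrt t), |q x|) ^ 2
      ≤ (1 / T) * (C + T * (ε/2)) := by
        rw [hIeq T]
        refine mul_le_mul_of_nonneg_left ?_ (by positivity)
        exact le_trans hIle (by rw [← hRtoReal]; exact ENNReal.toReal_mono hRne hJR)
    _ = C / T + ε/2 := by field_simp
    _ < ε := by
        have h2 : (2*C/ε) * ε = 2*C := div_mul_cancel₀ _ (ne_of_gt hε)
        have hCT : C / T < ε/2 := by
          rw [div_lt_iff₀ hT0]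
          nlinarith
        linarith
end

section
/- Let f, h be analytic on ℂ⁺ with 0 ≤ Im h(k) ≤ Im f(k) for all k ∈ ℂ⁺, and suppose f(iy) − h(iy) = o(1/y) as y → +∞. Then f = h + c for a real constant c; if moreover f(iy) − h(iy) → 0, then f = h. -/
open MeasureTheory Filter Set Metric

private lemma normSq_cayley (ζ : ℂ) :
    Complex.normSq (ζ + Complex.I) - Complex.normSq (ζ - Complex.I) = 4 * ζ.im := by
  simp [Complex.normSq_apply, Complex.add_re, Complex.add_im, Complex.sub_re, Complex.sub_im,
    Complex.I_re, Complex.I_im]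
  ring

private lemma mobius_normSq (a u : ℂ) :
    Complex.normSq (1 - (starRingEnd ℂ) a * u) - Complex.normSq (u - a)
      = (1 - Complex.normSq a) * (1 - Complex.normSq u) := by
  simp [Complex.normSq_apply, Complex.mul_re, Complex.mul_im, Complex.sub_re, Complex.sub_im,
    Complex.one_re, Complex.one_im, Complex.conj_re, Complex.conj_im]
  ring

private lemma cayley_ne (ζ : ℂ) (hζ : 0 < ζ.im) : ζ + Complex.I ≠ 0 := by
  intro hE
  have : (ζ + Complex.I).im = 0 := by rw [hE]; simp
  simp [Complex.add_im] at this
  linarith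

private lemma cayley_abs_lt (ζ : ℂ) (hζ : 0 < ζ.im) :
    ‖(ζ - Complex.I) / (ζ + Complex.I)‖ < 1 := by
  have h1 := normSq_cayley ζ
  have h2 : 0 < Complex.normSq (ζ + Complex.I) := by
    rw [Complex.normSq_pos]; exact cayley_ne ζ hζ
  have h3 : Complex.normSq (ζ - Complex.I) < Complex.normSq (ζ + Complex.I) := by linarith
  have h4 : ‖ζ - Complex.I‖ < ‖ζ + Complex.I‖ := by
    have := Complex.sq_norm (ζ - Complex.I)
    have := Complex.sq_norm (ζ + Complex.I)
    nlinarith [norm_nonneg (ζ - Complex.I), norm_nonneg (ζ + Complex.I)]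
  rw [norm_div, div_lt_one (norm_pos_iff.mpr (cayley_ne ζ hζ))]
  exact h4

private lemma mobius_denom_ne (a u : ℂ) (ha : ‖a‖ < 1) (hu : ‖u‖ < 1) :
    1 - (starRingEnd ℂ) a * u ≠ 0 := by
  have h1 := mobius_normSq a u
  have ha2 : Complex.normSq a < 1 := by rw [← Complex.sq_norm]; nlinarith [norm_nonneg a]
  have hu2 : Complex.normSq u < 1 := by rw [← Complex.sq_norm]; nlinarith [norm_nonneg u]
  have : 0 < Complex.normSq (1 - (starRingEnd ℂ) a * u) := by
    nlinarith [Complex.normSq_nonneg (u - a)]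
  rw [← Complex.normSq_pos]; exact this

private lemma mobius_abs_lt (a u : ℂ) (ha : ‖a‖ < 1) (hu : ‖u‖ < 1) :
    ‖(u - a) / (1 - (starRingEnd ℂ) a * u)‖ < 1 := by
  have h1 := mobius_normSq a u
  have ha2 : Complex.normSq a < 1 := by rw [← Complex.sq_norm]; nlinarith [norm_nonneg a]
  have hu2 : Complex.normSq u < 1 := by rw [← Complex.sq_norm]; nlinarith [norm_nonneg u]
  have hd : 0 < Complex.normSq (1 - (starRingEnd ℂ) a * u) := by
    nlinarith [Complex.normSq_nonneg (u - a)]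
  have hlt : Complex.normSq (u - a) < Complex.normSq (1 - (starRingEnd ℂ) a * u) := by
    nlinarith
  have h4 : ‖u - a‖ < ‖1 - (starRingEnd ℂ) a * u‖ := by
    have := Complex.sq_norm (u - a)
    have := Complex.sq_norm (1 - (starRingEnd ℂ) a * u)
    nlinarith [norm_nonneg (u - a), norm_nonneg (1 - (starRingEnd ℂ) a * u)]
  rw [norm_div, div_lt_one (norm_pos_iff.mpr (mobius_denom_ne a u ha hu))]
  exact h4


set_option maxHeartbeats 2000000 in
/-- Let `f, h` be analytic on `ℂ⁺` with `0 ≤ Im h(k) ≤ Im f(k)` there, and suppose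
`f(iy) − h(iy) = o(1/y)` as `y → +∞` (i.e. `y·(f(iy) − h(iy)) → 0`). Then
`f = h + c` for a real constant `c`; if moreover `f(iy) − h(iy) → 0`, then `f = h`
on `ℂ⁺`. -/
theorem stmt17 (f h : ℂ → ℂ)
    (hf : DifferentiableOn ℂ f {z : ℂ | 0 < z.im})
    (hh : DifferentiableOn ℂ h {z : ℂ | 0 < z.im})
    (him : ∀ k : ℂ, 0 < k.im → 0 ≤ (h k).im ∧ (h k).im ≤ (f k).im)
    (hsmall : Tendsto (fun y : ℝ => (y : ℂ) * (f (Complex.I * y) - h (Complex.I * y)))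
      atTop (nhds 0)) :
    (∃ c : ℝ, ∀ z : ℂ, 0 < z.im → f z = h z + (c : ℂ)) ∧
    (Tendsto (fun y : ℝ => f (Complex.I * y) - h (Complex.I * y)) atTop (nhds 0) →
      ∀ z : ℂ, 0 < z.im → f z = h z) := by
  set U : Set ℂ := {z : ℂ | 0 < z.im} with hUdef
  set g : ℂ → ℂ := fun z => f z - h z with hgdef
  have hUopen : IsOpen U := isOpen_lt continuous_const Complex.continuous_im
  have hUconn : IsPreconnected U := (convex_halfSpace_im_gt 0).isPreconnected
  have hg : DifferentiableOn ℂ g U := hf.sub hh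
  have hgim : ∀ z ∈ U, 0 ≤ (g z).im := by
    intro z hz
    have := him z hz
    simp only [hgdef, Complex.sub_im]
    linarith [this.1, this.2]
  have hIy : ∀ y : ℝ, 0 < y → (Complex.I * (y : ℂ)) ∈ U := by
    intro y hy
    simp only [hUdef, mem_setOf_eq, Complex.mul_im, Complex.I_re, Complex.I_im,
      Complex.ofReal_re, Complex.ofReal_im]
    simpa using hy
  -- the function g(iy) tends to 0
  have hinv : Tendsto (fun y : ℝ => ((y : ℂ))⁻¹) atTop (nhds 0) := by
    have : Tendsto (fun y : ℝ => ((y⁻¹ : ℝ) : ℂ)) atTop (nhds ((0 : ℝ) : ℂ)) :=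
      (Complex.continuous_ofReal.tendsto 0).comp tendsto_inv_atTop_zero
    simpa using this
  have hg0 : Tendsto (fun y : ℝ => g (Complex.I * y)) atTop (nhds 0) := by
    have hmul := hsmall.mul hinv
    rw [zero_mul] at hmul
    apply hmul.congr'
    filter_upwards [eventually_ge_atTop (1 : ℝ)] with y hy
    have hy0 : (y : ℂ) ≠ 0 := by
      simpa using (by linarith : y ≠ 0)
    field_simp [hgdef]
    rfl
  -- main claim: g vanishes on U
  have hmain : ∀ z ∈ U, g z = 0 := by
    have hconst : ∃ w, ∀ z ∈ U, g z = w := by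
      rcases (hg.analyticOnNhd hUopen).is_constant_or_isOpen hUconn with hc | hop
      · exact hc
      · exfalso
        by_cases hcase : ∀ z ∈ U, 0 < (g z).im
        · -- Schwarz lemma argument
          have hIU : Complex.I ∈ U := by simp [hUdef, Set.mem_setOf_eq]
          set u : ℂ := (g Complex.I - Complex.I) / (g Complex.I + Complex.I) with hudef
          have hu : ‖u‖ < 1 := cayley_abs_lt _ (hcase _ hIU)
          set ε : ℝ := 1 - ‖u‖ with hεdef
          have hε : 0 < ε := by simp only [hεdef]; linarith
          have habs : Tendsto (fun y : ℝ => y * ‖g (Complex.I * y)‖)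
              atTop (nhds 0) := by
            have hn := hsmall.norm
            rw [norm_zero] at hn
            apply hn.congr'
            filter_upwards [eventually_ge_atTop (0 : ℝ)] with y hy
            rw [norm_mul, Complex.norm_real, Real.norm_eq_abs, abs_of_nonneg hy]
          have hev1 : ∀ᶠ y : ℝ in atTop, ‖g (Complex.I * y)‖ < 1 / 2 := by
            have hq1 := Metric.tendsto_nhds.mp hg0 (1 / 2) (by norm_num)
            filter_upwards [hq1] with y hy
            rwa [dist_zero_right] at hy
          have hev2 : ∀ᶠ y : ℝ in atTop, y * ‖g (Complex.I * y)‖ < ε / 96 := by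
            have hq2 := Metric.tendsto_nhds.mp habs (ε / 96) (by positivity)
            filter_upwards [hq2] with y hy
            rw [Real.dist_eq, sub_zero] at hy
            exact lt_of_abs_lt hy
          obtain ⟨y, hy2, hw12, hy96⟩ :=
            ((eventually_ge_atTop (2 : ℝ)).and (hev1.and hev2)).exists
          set c : ℂ := Complex.I * (y : ℂ) with hcdef
          have hcU : c ∈ U := hIy y (by linarith)
          set w : ℂ := g c with hwdef
          have hwim : 0 < w.im := hcase _ hcU
          set a : ℂ := (w - Complex.I) / (w + Complex.I) with hadef
          have ha : ‖a‖ < 1 := cayley_abs_lt _ hwim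
          have hR₁ : (0 : ℝ) < y - 1 / 2 := by linarith
          have hballU : Metric.ball c (y - 1 / 2) ⊆ U := by
            intro z hz
            rw [Metric.mem_ball, Complex.dist_eq] at hz
            have h2 : |(z - c).im| ≤ ‖z - c‖ := Complex.abs_im_le_norm _
            have h3 : (z - c).im = z.im - y := by
              simp [hcdef, Complex.sub_im, Complex.mul_im, Complex.I_re, Complex.I_im,
                Complex.ofReal_re, Complex.ofReal_im]
            rw [h3] at h2
            have h4 : |z.im - y| < y - 1 / 2 := lt_of_le_of_lt h2 hz
            have h4' := abs_lt.1 h4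
            show 0 < z.im
            linarith [h4'.1]
          have hdIc : dist Complex.I c = y - 1 := by
            rw [Complex.dist_eq, hcdef]
            have h5 : Complex.I - Complex.I * (y : ℂ) = Complex.I * (((1 - y : ℝ) : ℂ)) := by
              push_cast; ring
            rw [h5, norm_mul, Complex.norm_I, one_mul, Complex.norm_real, Real.norm_eq_abs,
              abs_of_nonpos (by linarith)]
            ring
          have hIball : Complex.I ∈ Metric.ball c (y - 1 / 2) := by
            rw [Metric.mem_ball, hdIc]; linarith
          have hqlt : ∀ z ∈ Metric.ball c (y - 1 / 2),
              ‖(g z - Complex.I) / (g z + Complex.I)‖ < 1 :=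
            fun z hz => cayley_abs_lt _ (hcase z (hballU hz))
          set Φ : ℂ → ℂ := fun z =>
            ((g z - Complex.I) / (g z + Complex.I) - a) /
              (1 - (starRingEnd ℂ) a * ((g z - Complex.I) / (g z + Complex.I))) with hΦdef
          have hq : DifferentiableOn ℂ (fun z => (g z - Complex.I) / (g z + Complex.I))
              (Metric.ball c (y - 1 / 2)) := by
            have hgb : DifferentiableOn ℂ g (Metric.ball c (y - 1 / 2)) := hg.mono hballU
            exact (hgb.sub (differentiableOn_const _)).div
              (hgb.add (differentiableOn_const _))
              (fun z hz => cayley_ne _ (hcase z (hballU hz)))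
          have hΦdiff : DifferentiableOn ℂ Φ (Metric.ball c (y - 1 / 2)) := by
            apply (hq.sub (differentiableOn_const _)).div
              ((differentiableOn_const _).sub ((differentiableOn_const _).mul hq))
            exact fun z hz => mobius_denom_ne a _ ha (hqlt z hz)
          have hΦc : Φ c = 0 := by
            simp only [hΦdef]
            rw [← hwdef, ← hadef, sub_self, zero_div]
          have hmaps : Set.MapsTo Φ (Metric.ball c (y - 1 / 2)) (Metric.ball (Φ c) 1) := by
            intro z hz
            rw [Metric.mem_ball, hΦc, Complex.dist_eq, sub_zero]
            exact mobius_abs_lt a _ ha (hqlt z hz)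
          have hschwarz := Complex.dist_le_div_mul_dist_of_mapsTo_ball hΦdiff (hmaps.mono_right ball_subset_closedBall) hIball
          rw [hΦc, hdIc, Complex.dist_eq, sub_zero] at hschwarz
          have hΦI : Φ Complex.I = (u - a) / (1 - (starRingEnd ℂ) a * u) := by
            simp only [hΦdef]
            rfl
          rw [hΦI] at hschwarz
          -- now pure real arithmetic
          set A : ℝ := ‖a‖ with hAdef
          set B : ℝ := ‖u‖ with hBdef
          set d : ℝ := ‖u - a‖ with hddef
          set D1 : ℝ := ‖1 - (starRingEnd ℂ) a * u‖ with hD1def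
          have hD1pos : 0 < D1 := norm_pos_iff.mpr (mobius_denom_ne a u ha hu)
          have hd0 : 0 ≤ d := norm_nonneg _
          have hA0 : 0 ≤ A := norm_nonneg _
          have hB0 : 0 ≤ B := norm_nonneg _
          have F1 : d ≤ (y - 1) / (y - 1 / 2) * D1 := by
            rw [norm_div, ← hddef, ← hD1def] at hschwarz
            calc d = d / D1 * D1 := by field_simp
              _ ≤ 1 / (y - 1 / 2) * (y - 1) * D1 :=
                  mul_le_mul_of_nonneg_right hschwarz hD1pos.le
              _ = (y - 1) / (y - 1 / 2) * D1 := by ring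
          have F2 : D1 ≤ (1 - A ^ 2) + d := by
            have hsplit : (1 : ℂ) - (starRingEnd ℂ) a * u =
                (1 - a * (starRingEnd ℂ) a) + (starRingEnd ℂ) a * (a - u) := by ring
            have htri : D1 ≤ ‖1 - a * (starRingEnd ℂ) a‖ +
                ‖(starRingEnd ℂ) a * (a - u)‖ := by
              rw [hD1def, hsplit]; exact norm_add_le _ _
            have h6 : ‖1 - a * (starRingEnd ℂ) a‖ = 1 - A ^ 2 := by
              rw [Complex.mul_conj]
              have h7 : (1 : ℂ) - (Complex.normSq a : ℂ) =
                  ((1 - Complex.normSq a : ℝ) : ℂ) := by push_cast; ring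
              rw [h7, Complex.norm_real, Real.norm_eq_abs, ← Complex.sq_norm, ← hAdef,
                abs_of_nonneg (by nlinarith)]
            have h8 : ‖(starRingEnd ℂ) a * (a - u)‖ ≤ d := by
              rw [norm_mul, Complex.norm_conj, ← hAdef]
              have h9 : ‖a - u‖ = d := by
                rw [hddef, ← norm_neg (u - a), neg_sub]
              rw [h9]
              nlinarith
            linarith
          have F3 : A - B ≤ d := by
            have t := norm_sub_norm_le a u
            rw [norm_sub_rev] at t
            simpa [← hAdef, ← hBdef, ← hddef] using t
          set r : ℝ := (y - 1) / (y - 1 / 2) with hrdef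
          have hr0 : 0 ≤ r := div_nonneg (by linarith) hR₁.le
          have hr1 : r ≤ 1 := by
            rw [hrdef, div_le_one hR₁]; linarith
          have h1A2 : 0 ≤ 1 - A ^ 2 := by nlinarith
          have e1 : d ≤ r * (1 - A ^ 2) + r * d := by
            calc d ≤ r * D1 := F1
              _ ≤ r * ((1 - A ^ 2) + d) := mul_le_mul_of_nonneg_left F2 hr0
              _ = r * (1 - A ^ 2) + r * d := by ring
          have e2 : (1 - r) * d ≤ 1 - A ^ 2 := by
            nlinarith [mul_le_mul_of_nonneg_right hr1 h1A2]
          have e4' : (1 - r) * (y - 1 / 2) = 1 / 2 := by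
            rw [hrdef, sub_mul, one_mul, div_mul_cancel₀ _ hR₁.ne']
            ring
          have e6 : d * ((1 - r) * (y - 1 / 2)) ≤ (1 - A ^ 2) * (y - 1 / 2) := by
            calc d * ((1 - r) * (y - 1 / 2)) = (1 - r) * d * (y - 1 / 2) := by ring
              _ ≤ (1 - A ^ 2) * (y - 1 / 2) := mul_le_mul_of_nonneg_right e2 hR₁.le
          rw [e4'] at e6
          have e5 : d ≤ 2 * y * (1 - A ^ 2) := by
            nlinarith [mul_le_mul_of_nonneg_left (show y - 1 / 2 ≤ y by linarith) h1A2]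
          have eps1 : ε ≤ (1 + 2 * y) * (1 - A ^ 2) := by
            have hAle : A ^ 2 ≤ A := by nlinarith
            have h10 : 1 - B ≤ (1 - A ^ 2) + d := by linarith
            rw [hεdef]
            nlinarith
          have hNS : (1 : ℝ) / 4 ≤ Complex.normSq (w + Complex.I) := by
            have t1 : ‖(w + Complex.I) - w‖ ≤ ‖w + Complex.I‖ + ‖w‖ := norm_sub_le _ _
            have t2 : (w + Complex.I) - w = Complex.I := by ring
            rw [t2] at t1
            simp only [Complex.norm_I] at t1
            have hsq := Complex.sq_norm (w + Complex.I)
            nlinarith [hw12, norm_nonneg (w + Complex.I)]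
          have hNSpos : 0 < Complex.normSq (w + Complex.I) := by linarith
          have hA2eq : A ^ 2 = Complex.normSq (w - Complex.I) /
              Complex.normSq (w + Complex.I) := by
            rw [hAdef, Complex.sq_norm, hadef, Complex.normSq_div]
          have hkey : (1 - A ^ 2) * Complex.normSq (w + Complex.I) = 4 * w.im := by
            rw [hA2eq, sub_mul, one_mul, div_mul_cancel₀ _ hNSpos.ne']
            linarith [normSq_cayley w]
          have h16 : 1 - A ^ 2 ≤ 16 * w.im := by
            nlinarith [mul_le_mul_of_nonneg_left hNS h1A2]
          have s2 : w.im ≤ ‖w‖ := le_trans (le_abs_self _) (Complex.abs_im_le_norm w)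
          have s1 : ε ≤ (1 + 2 * y) * (16 * w.im) :=
            le_trans eps1 (mul_le_mul_of_nonneg_left h16 (by linarith))
          have s3 : (1 + 2 * y) * (16 * w.im) ≤ 3 * y * (16 * w.im) :=
            mul_le_mul_of_nonneg_right (by linarith) (by linarith)
          have s4 : 3 * y * (16 * w.im) ≤ 48 * (y * ‖w‖) := by
            nlinarith [mul_le_mul_of_nonneg_left s2 (show (0 : ℝ) ≤ 48 * y by linarith)]
          linarith [hy96]
        · -- image is open yet im ≥ 0 with a zero: contradiction
          push_neg at hcase
          obtain ⟨z₀, hz₀, hz₀im⟩ := hcase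
          have him0 : (g z₀).im = 0 := le_antisymm hz₀im (hgim z₀ hz₀)
          have hopen : IsOpen (g '' U) := hop U subset_rfl hUopen
          obtain ⟨ε, hε, hball⟩ := Metric.isOpen_iff.1 hopen (g z₀) ⟨z₀, hz₀, rfl⟩
          have hmem : g z₀ - (ε / 2 : ℝ) * Complex.I ∈ Metric.ball (g z₀) ε := by
            simp only [Metric.mem_ball, dist_eq_norm]
            have : g z₀ - (ε / 2 : ℝ) * Complex.I - g z₀ = -((ε / 2 : ℝ) * Complex.I) := by ring
            rw [this]
            simp only [norm_neg]
            rw [norm_mul]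
            simp only [Complex.norm_real, Complex.norm_I, mul_one]
            rw [Real.norm_eq_abs, abs_of_pos (by linarith)]
            linarith
          obtain ⟨z₁, hz₁U, hz₁⟩ := hball hmem
          have : (g z₁).im = -(ε / 2) := by
            rw [hz₁]
            simp [Complex.sub_im, Complex.mul_im, him0]
          have := hgim z₁ hz₁U
          linarith
    obtain ⟨w, hw⟩ := hconst
    have hw0 : w = 0 := by
      have h1 : Tendsto (fun _ : ℝ => w) atTop (nhds w) := tendsto_const_nhds
      have h2 : Tendsto (fun y : ℝ => g (Complex.I * y)) atTop (nhds w) := by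
        apply h1.congr'
        filter_upwards [eventually_gt_atTop (0 : ℝ)] with y hy
        exact (hw _ (hIy y hy)).symm
      exact tendsto_nhds_unique h2 hg0
    intro z hz
    rw [hw z hz, hw0]
  have hfh : ∀ z : ℂ, 0 < z.im → f z = h z := by
    intro z hz
    have := hmain z hz
    simp only [hgdef] at this
    exact sub_eq_zero.1 this
  exact ⟨⟨0, fun z hz => by rw [hfh z hz]; simp⟩, fun _ z hz => hfh z hz⟩
end
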